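/- arXiv:2204.11074 — 5 statements merged into one kernel-verified Lean document; each statement's English description precedes it below -/
import Mathlib

section
/- For the Barnes G-function, the reflection formula holds: for all real z with 0 < z < 1, G(1 - z) = G(1 + z) · (2π)^{-z} · exp(∫₀^z π t · cot(π t) dt). -/
open Real

/-- `GG z` is the Barnes G-function evaluated at `z + 1`, defined by the Weierstrass
product `G(z+1) = (2π)^{z/2} exp(-z(z+1)/2 - γ z²/2) ∏_{n≥1} (1+z/n)^n exp(-z + z²/(2n))`. -/
noncomputable def GG (z : ℝ) : ℝ :=
  (2 * π) ^ (z / 2) *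
    Real.exp (-(z * (z + 1)) / 2 - Real.eulerMascheroniConstant * z ^ 2 / 2) *
    ∏' n : ℕ, (1 + z / (n + 1)) ^ (n + 1) * Real.exp (-z + z ^ 2 / (2 * (n + 1)))

open Real Filter Topology MeasureTheory

noncomputable def l (z : ℝ) (n : ℕ) : ℝ :=
  ((n : ℝ) + 1) * Real.log (1 + z / ((n : ℝ) + 1)) - z + z ^ 2 / (2 * ((n : ℝ) + 1))

lemma summable_inv_sq' : Summable (fun n : ℕ => 1 / ((n : ℝ) + 1) ^ 2) := by
  have h := Real.summable_one_div_nat_pow.2 (le_refl 2)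
  have h2 := (summable_nat_add_iff 1).2 h
  exact h2.congr (fun n => by push_cast; ring)

lemma den_pos {b : ℝ} (hb1 : b < 1) (hb0 : 0 ≤ b) (n : ℕ) :
    (0:ℝ) < ((n:ℝ) + 1) ^ 2 - b ^ 2 := by
  have hn : (1:ℝ) ≤ (n:ℝ) + 1 := by have := Nat.cast_nonneg (α := ℝ) n; linarith
  nlinarith

lemma abs_l_le {z : ℝ} (hz : |z| < 1) (n : ℕ) :
    |l z n| ≤ (|z| ^ 3 / (1 - |z|)) * (1 / ((n : ℝ) + 1) ^ 2) := by
  have hn1 : (0 : ℝ) < (n : ℝ) + 1 := by positivity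
  set x : ℝ := -z / ((n : ℝ) + 1) with hx
  have hxabs : |x| = |z| / ((n : ℝ) + 1) := by
    rw [hx, abs_div, abs_neg, abs_of_pos hn1]
  have hxlt : |x| < 1 := by
    rw [hxabs]
    calc |z| / ((n : ℝ) + 1) ≤ |z| / 1 := by
          apply div_le_div_of_nonneg_left (abs_nonneg z) one_pos
          · linarith
      _ < 1 := by simpa using hz
  have key := Real.abs_log_sub_add_sum_range_le hxlt 2
  have hsum : (∑ i ∈ Finset.range 2, x ^ (i + 1) / (i + 1)) = x + x ^ 2 / 2 := by
    simp [Finset.sum_range_succ]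
    ring
  rw [hsum] at key
  have h1x : 1 - x = 1 + z / ((n : ℝ) + 1) := by rw [hx]; ring
  rw [h1x] at key
  have hl : l z n = ((n : ℝ) + 1) * (x + x ^ 2 / 2 + Real.log (1 + z / ((n : ℝ) + 1))) := by
    rw [l, hx]
    field_simp
    ring
  have : |l z n| = ((n : ℝ) + 1) * |x + x ^ 2 / 2 + Real.log (1 + z / ((n : ℝ) + 1))| := by
    rw [hl, abs_mul, abs_of_pos hn1]
  rw [this]
  have hb : ((n : ℝ) + 1) * (|x| ^ (2 + 1) / (1 - |x|)) ≤ (|z| ^ 3 / (1 - |z|)) * (1 / ((n : ℝ) + 1) ^ 2) := by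
    rw [hxabs]
    have h2 : (0 : ℝ) < 1 - |z| := by linarith
    have h3 : (0 : ℝ) < 1 - |z| / ((n : ℝ) + 1) := by
      have : |z| / ((n : ℝ) + 1) ≤ |z| := div_le_self (abs_nonneg z) (by linarith)
      linarith
    have e1 : ((n : ℝ) + 1) * ((|z| / ((n:ℝ)+1)) ^ (2 + 1) / (1 - |z| / ((n:ℝ)+1)))
        = |z| ^ 3 / (((n : ℝ) + 1) * (((n : ℝ) + 1) - |z|)) := by
      have h4 : (0:ℝ) < ((n : ℝ) + 1) - |z| := by linarith
      rw [div_pow]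
      field_simp
    have e2 : (|z| ^ 3 / (1 - |z|)) * (1 / ((n : ℝ) + 1) ^ 2)
        = |z| ^ 3 / (((n : ℝ) + 1) * ((1 - |z|) * ((n : ℝ) + 1))) := by
      field_simp
    rw [e1, e2]
    have hnn : (0:ℝ) ≤ (n:ℝ) := Nat.cast_nonneg n
    gcongr
    nlinarith [mul_nonneg hnn (abs_nonneg z)]
  calc ((n : ℝ) + 1) * |x + x ^ 2 / 2 + Real.log (1 + z / ((n : ℝ) + 1))|
      ≤ ((n : ℝ) + 1) * (|x| ^ (2 + 1) / (1 - |x|)) := by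
        apply mul_le_mul_of_nonneg_left key hn1.le
    _ ≤ _ := hb


lemma summable_l {z : ℝ} (hz : |z| < 1) : Summable (l z) := by
  apply Summable.of_abs
  apply Summable.of_nonneg_of_le (fun n => abs_nonneg _) (abs_l_le hz)
  exact (summable_inv_sq').mul_left _

lemma one_add_pos {z : ℝ} (hz : |z| < 1) (n : ℕ) : (0:ℝ) < 1 + z / ((n : ℝ) + 1) := by
  have hn1 : (0 : ℝ) < (n : ℝ) + 1 := by positivity
  have : |z / ((n:ℝ)+1)| < 1 := by
    rw [abs_div, abs_of_pos hn1]
    calc |z| / ((n:ℝ)+1) ≤ |z| / 1 := by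
          apply div_le_div_of_nonneg_left (abs_nonneg z) one_pos; linarith
      _ < 1 := by simpa using hz
  have := neg_lt_of_abs_lt this
  linarith

lemma tprod_eq {z : ℝ} (hz : |z| < 1) :
    (∏' n : ℕ, (1 + z / ((n:ℝ) + 1)) ^ (n + 1) * Real.exp (-z + z ^ 2 / (2 * ((n:ℝ) + 1))))
      = Real.exp (∑' n, l z n) := by
  have h := ((summable_l hz).hasSum.rexp).tprod_eq
  rw [← h]
  apply tprod_congr
  intro n
  have hpos := one_add_pos hz n
  have : (1 + z / ((n:ℝ) + 1)) ^ (n + 1) = Real.exp (((n:ℝ)+1) * Real.log (1 + z / ((n:ℝ)+1))) := by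
    rw [← Real.exp_log hpos, ← Real.exp_nat_mul]
    norm_num
  rw [this, ← Real.exp_add, Function.comp_apply, l]
  ring_nf

lemma GG_eq {z : ℝ} (hz : |z| < 1) :
    GG z = (2 * π) ^ (z / 2) *
      Real.exp (-(z * (z + 1)) / 2 - Real.eulerMascheroniConstant * z ^ 2 / 2 + ∑' n, l z n) := by
  rw [GG, tprod_eq hz, mul_assoc, ← Real.exp_add]

lemma GG_ratio {z : ℝ} (h0 : 0 < z) (h1 : z < 1) :
    GG (-z) = GG z * (2 * π) ^ (-z) *
      Real.exp (z + ∑' n, (l (-z) n - l z n)) := by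
  have hz : |z| < 1 := by rw [abs_of_pos h0]; exact h1
  have hz' : |(-z)| < 1 := by rwa [abs_neg]
  rw [GG_eq hz, GG_eq hz']
  have h2pi : (0:ℝ) < 2 * π := by positivity
  have hr : (2 * π) ^ (-z / 2) = (2 * π) ^ (z / 2) * (2 * π) ^ (-z) := by
    rw [← Real.rpow_add h2pi]; ring_nf
  rw [hr, Summable.tsum_sub (summable_l hz') (summable_l hz)]
  set T1 := ∑' n, l (-z) n
  set T2 := ∑' n, l z n
  have hexp : rexp (-(-z * (-z + 1)) / 2 - eulerMascheroniConstant * (-z) ^ 2 / 2 + T1)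
      = rexp (-(z * (z + 1)) / 2 - eulerMascheroniConstant * z ^ 2 / 2 + T2) * rexp (z + (T1 - T2)) := by
    rw [← Real.exp_add]; congr 1; ring
  rw [hexp]; ring

noncomputable def vv (n : ℕ) (t : ℝ) : ℝ := -2 * t / (((n:ℝ) + 1) ^ 2 - t ^ 2)

lemma summable_bound {b : ℝ} (hb1 : b < 1) (hb0 : 0 ≤ b) :
    Summable (fun n : ℕ => 2 * b / (((n:ℝ) + 1) ^ 2 - b ^ 2)) := by
  apply Summable.of_nonneg_of_le
    (fun n => div_nonneg (by positivity) (den_pos hb1 hb0 n).le)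
    (fun n => ?_) ((summable_inv_sq').mul_left (2 * b / (1 - b ^ 2)))
  have hd := den_pos hb1 hb0 n
  have hn : (1:ℝ) ≤ (n:ℝ) + 1 := by have := Nat.cast_nonneg (α := ℝ) n; linarith
  have h9 : (1:ℝ) ≤ ((n:ℝ) + 1) ^ 2 := by nlinarith
  have key : ((n:ℝ) + 1) ^ 2 * (1 - b ^ 2) ≤ ((n:ℝ) + 1) ^ 2 - b ^ 2 := by
    nlinarith [mul_nonneg (sq_nonneg b) (sub_nonneg.2 h9)]
  have hb2 : (0:ℝ) < 1 - b ^ 2 := by nlinarith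
  rw [div_mul_div_comm, mul_one, div_le_div_iff₀ hd (by positivity)]
  nlinarith [mul_le_mul_of_nonneg_left key (by positivity : (0:ℝ) ≤ 2 * b)]

lemma cot_expansion {x : ℝ} (h0 : 0 < x) (h1 : x < 1) :
    π * x * (Real.cos (π * x) / Real.sin (π * x))
      = 1 + ∑' n : ℕ, (-2 * x ^ 2 / (((n:ℝ) + 1) ^ 2 - x ^ 2)) := by
  set b : ℝ := (1 + x) / 2 with hbdef
  have hxb : x < b := by rw [hbdef]; linarith
  have hb1 : b < 1 := by rw [hbdef]; linarith
  have hb0 : (0:ℝ) < b := by rw [hbdef]; linarith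
  set s : Set ℝ := Set.Ioo 0 b with hsdef
  have hs_open : IsOpen s := isOpen_Ioo
  have hxs : x ∈ s := ⟨h0, hxb⟩
  -- facts for t ∈ s
  have hmem : ∀ t ∈ s, 0 < t ∧ t < 1 := by
    rintro t ⟨ht0, htb⟩; exact ⟨ht0, htb.trans hb1⟩
  set F : ℕ → ℝ → ℝ := fun N t =>
    Real.log (π * t) + ∑ j ∈ Finset.range N, Real.log (1 - t ^ 2 / ((j:ℝ) + 1) ^ 2) with hF
  set F' : ℕ → ℝ → ℝ := fun N t => 1 / t + ∑ j ∈ Finset.range N, vv j t with hF'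
  set g : ℝ → ℝ := fun t => Real.log (Real.sin (π * t)) with hg
  set g' : ℝ → ℝ := fun t => 1 / t + ∑' j : ℕ, vv j t with hg'
  have hderiv : ∀ N : ℕ, ∀ t ∈ s, HasDerivAt (F N) (F' N t) t := by
    intro N t hts
    obtain ⟨ht0, ht1⟩ := hmem t hts
    have h1' : HasDerivAt (fun t : ℝ => Real.log (π * t)) (1 / t) t := by
      have hπ : HasDerivAt (fun t : ℝ => π * t) π t := by
        simpa using (hasDerivAt_id t).const_mul π
      have := hπ.log (by positivity)
      convert this using 1
      rw [eq_div_iff (by positivity)]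
      field_simp
    have h2' : ∀ j : ℕ, HasDerivAt (fun t : ℝ => Real.log (1 - t ^ 2 / ((j:ℝ) + 1) ^ 2))
        (vv j t) t := by
      intro j
      have hd := den_pos ht1 ht0.le j
      have hj1 : (0:ℝ) < ((j:ℝ) + 1) ^ 2 := by positivity
      have hin : HasDerivAt (fun t : ℝ => 1 - t ^ 2 / ((j:ℝ) + 1) ^ 2)
          (-(2 * t) / ((j:ℝ) + 1) ^ 2) t := by
        have : HasDerivAt (fun t : ℝ => t ^ 2) (2 * t) t := by
          simpa using hasDerivAt_pow 2 t
        have h2 := (this.div_const (((j:ℝ) + 1) ^ 2)).const_sub 1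
        refine h2.congr_deriv ?_
        ring
      have hne : 1 - t ^ 2 / ((j:ℝ) + 1) ^ 2 ≠ 0 := by
        have : 1 - t ^ 2 / ((j:ℝ) + 1) ^ 2 = (((j:ℝ) + 1) ^ 2 - t ^ 2) / ((j:ℝ) + 1) ^ 2 := by
          field_simp
        rw [this]; positivity
      have := hin.log hne
      convert this using 1
      rw [vv, eq_div_iff hne]
      field_simp
    exact h1'.add (HasDerivAt.fun_sum (fun j _ => h2' j))
  have hunif : TendstoUniformlyOn F' g' atTop s := by
    have hA : TendstoUniformlyOn (fun N t => ∑ j ∈ Finset.range N, vv j t)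
        (fun t => ∑' j, vv j t) atTop s := by
      apply tendstoUniformlyOn_tsum_nat (summable_bound hb1 hb0.le)
      intro n t hts
      obtain ⟨ht0, htb⟩ := hts
      have hd := den_pos hb1 hb0.le n
      have hdt := den_pos ((htb.trans hb1)) ht0.le n
      rw [vv, Real.norm_eq_abs, abs_div, abs_of_pos hdt]
      have : |(-2 : ℝ) * t| = 2 * t := by
        rw [abs_mul]; simp [abs_of_pos ht0]
      rw [this]
      have hn : (1:ℝ) ≤ (n:ℝ) + 1 := by have := Nat.cast_nonneg (α := ℝ) n; linarith
      gcongr <;> nlinarith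
    have hC : TendstoUniformlyOn (fun (_ : ℕ) t => 1 / t) (fun t => 1 / t) atTop s :=
      Metric.tendstoUniformlyOn_iff.2 fun ε hε => Filter.Eventually.of_forall fun n t _ => by
        simpa [dist_self] using hε
    exact hC.add hA
  have hpt : ∀ t ∈ s, Tendsto (fun N => F N t) atTop (𝓝 (g t)) := by
    intro t hts
    obtain ⟨ht0, ht1⟩ := hmem t hts
    have hsin : 0 < Real.sin (π * t) := by
      apply Real.sin_pos_of_pos_of_lt_pi (by positivity)
      calc π * t < π * 1 := by
            apply mul_lt_mul_of_pos_left ht1 Real.pi_pos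
        _ = π := mul_one π
    have heuler := Real.tendsto_euler_sin_prod t
    have hlog := (Real.continuousAt_log hsin.ne').tendsto.comp heuler
    apply hlog.congr
    intro N
    simp only [Function.comp_apply]
    rw [hF]
    have hpos : ∀ j ∈ Finset.range N, (1 : ℝ) - t ^ 2 / ((j:ℝ) + 1) ^ 2 ≠ 0 := by
      intro j _
      have hd := den_pos ht1 ht0.le j
      have : 1 - t ^ 2 / ((j:ℝ) + 1) ^ 2 = (((j:ℝ) + 1) ^ 2 - t ^ 2) / ((j:ℝ) + 1) ^ 2 := by
        field_simp
      rw [this]; positivity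
    rw [Real.log_mul (by positivity) (Finset.prod_ne_zero_iff.2 hpos), Real.log_prod hpos]
  have hx_deriv : HasDerivAt g (g' x) x :=
    hasDerivAt_of_tendstoUniformlyOn hs_open hunif
      (Filter.Eventually.of_forall hderiv) hpt hxs
  have hsinx : 0 < Real.sin (π * x) := by
    apply Real.sin_pos_of_pos_of_lt_pi (by positivity)
    calc π * x < π * 1 := by apply mul_lt_mul_of_pos_left h1 Real.pi_pos
      _ = π := mul_one π
  have hx_deriv2 : HasDerivAt g (π * Real.cos (π * x) / Real.sin (π * x)) x := by
    have hπ : HasDerivAt (fun t : ℝ => π * t) π x := by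
      simpa using (hasDerivAt_id x).const_mul π
    have hsin : HasDerivAt (fun t : ℝ => Real.sin (π * t)) (Real.cos (π * x) * π) x :=
      (Real.hasDerivAt_sin (π * x)).comp x hπ
    have := hsin.log hsinx.ne'
    convert this using 1
    ring
  have heq : π * Real.cos (π * x) / Real.sin (π * x) = 1 / x + ∑' j : ℕ, vv j x :=
    hx_deriv2.unique hx_deriv
  have hxne : x ≠ 0 := h0.ne'
  have : π * x * (Real.cos (π * x) / Real.sin (π * x))
      = x * (π * Real.cos (π * x) / Real.sin (π * x)) := by ring
  rw [this, heq, mul_add, mul_one_div, div_self hxne, ← tsum_mul_left]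
  congr 1
  apply tsum_congr
  intro j
  rw [vv]
  ring

noncomputable def uu (n : ℕ) (t : ℝ) : ℝ := -2 * t ^ 2 / (((n:ℝ) + 1) ^ 2 - t ^ 2)

-- summable comparison bound on [0,z]
lemma summable_ubound {z : ℝ} (h0 : 0 < z) (h1 : z < 1) :
    Summable (fun n : ℕ => 2 * z ^ 2 / (((n:ℝ) + 1) ^ 2 - z ^ 2)) := by
  apply Summable.of_nonneg_of_le
    (fun n => div_nonneg (by positivity) (den_pos h1 h0.le n).le)
    (fun n => ?_) ((summable_inv_sq').mul_left (2 * z ^ 2 / (1 - z ^ 2)))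
  have hd := den_pos h1 h0.le n
  have hn : (1:ℝ) ≤ (n:ℝ) + 1 := by have := Nat.cast_nonneg (α := ℝ) n; linarith
  have h9 : (1:ℝ) ≤ ((n:ℝ) + 1) ^ 2 := by nlinarith
  have key : ((n:ℝ) + 1) ^ 2 * (1 - z ^ 2) ≤ ((n:ℝ) + 1) ^ 2 - z ^ 2 := by
    nlinarith [mul_nonneg (sq_nonneg z) (sub_nonneg.2 h9)]
  have hz2 : (0:ℝ) < 1 - z ^ 2 := by nlinarith
  rw [div_mul_div_comm, mul_one, div_le_div_iff₀ hd (by positivity)]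
  nlinarith [mul_le_mul_of_nonneg_left key (by positivity : (0:ℝ) ≤ 2 * z ^ 2)]

lemma uu_bound {z : ℝ} (h0 : 0 < z) (h1 : z < 1) {t : ℝ} (ht : t ∈ Set.Icc (0:ℝ) z) (n : ℕ) :
    ‖uu n t‖ ≤ 2 * z ^ 2 / (((n:ℝ) + 1) ^ 2 - z ^ 2) := by
  obtain ⟨ht0, htz⟩ := ht
  have hd := den_pos h1 h0.le n
  have hdt := den_pos (lt_of_le_of_lt htz h1) ht0 n
  rw [uu, Real.norm_eq_abs, abs_div, abs_of_pos hdt]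
  have : |(-2 : ℝ) * t ^ 2| = 2 * t ^ 2 := by rw [abs_mul]; simp [abs_of_nonneg (sq_nonneg t)]
  rw [this]
  gcongr <;> nlinarith

lemma uu_contOn {z : ℝ} (h0 : 0 < z) (h1 : z < 1) (n : ℕ) :
    ContinuousOn (uu n) (Set.Icc (0:ℝ) z) := by
  apply ContinuousOn.div (by fun_prop) (by fun_prop)
  intro t ht
  exact (den_pos (lt_of_le_of_lt ht.2 h1) ht.1 n).ne'

lemma per_term_integral {z : ℝ} (h0 : 0 < z) (h1 : z < 1) (n : ℕ) :
    (∫ t in (0:ℝ)..z, uu n t)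
      = ((n:ℝ) + 1) * (Real.log (1 - z / ((n:ℝ) + 1)) - Real.log (1 + z / ((n:ℝ) + 1))) + 2 * z := by
  set G : ℝ → ℝ := fun t =>
    ((n:ℝ) + 1) * (Real.log (1 - t / ((n:ℝ) + 1)) - Real.log (1 + t / ((n:ℝ) + 1))) + 2 * t with hG
  have hn1 : (0:ℝ) < (n:ℝ) + 1 := by positivity
  have hderiv : ∀ t ∈ Set.uIcc (0:ℝ) z, HasDerivAt G (uu n t) t := by
    intro t ht
    rw [Set.uIcc_of_le h0.le] at ht
    obtain ⟨ht0, htz⟩ := ht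
    have ht1 : t < 1 := lt_of_le_of_lt htz h1
    have hne1 : 1 - t / ((n:ℝ) + 1) ≠ 0 := by
      have : t / ((n:ℝ) + 1) < 1 := by
        rw [div_lt_one hn1]; linarith [Nat.cast_nonneg (α := ℝ) n]
      linarith
    have hne2 : 1 + t / ((n:ℝ) + 1) ≠ 0 := by positivity
    have hd1 : HasDerivAt (fun t : ℝ => 1 - t / ((n:ℝ) + 1)) (-(1 / ((n:ℝ) + 1))) t := by
      simpa using ((hasDerivAt_id t).div_const ((n:ℝ) + 1)).const_sub 1
    have hd2 : HasDerivAt (fun t : ℝ => 1 + t / ((n:ℝ) + 1)) (1 / ((n:ℝ) + 1)) t := by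
      simpa using ((hasDerivAt_id t).div_const ((n:ℝ) + 1)).const_add 1
    have hl1 := hd1.log hne1
    have hl2 := hd2.log hne2
    have hcomb := (((hl1.sub hl2).const_mul ((n:ℝ) + 1)).add
      (((hasDerivAt_id t).const_mul (2:ℝ))))
    refine hcomb.congr_deriv ?_
    rw [uu]
    have e1 : 1 - t / ((n:ℝ) + 1) = (((n:ℝ) + 1) - t) / ((n:ℝ) + 1) := by field_simp
    have e2 : 1 + t / ((n:ℝ) + 1) = (((n:ℝ) + 1) + t) / ((n:ℝ) + 1) := by field_simp
    have hp1 : (0:ℝ) < ((n:ℝ) + 1) - t := by linarith [Nat.cast_nonneg (α := ℝ) n]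
    have hp2 : (0:ℝ) < ((n:ℝ) + 1) + t := by linarith
    have hdt : (0:ℝ) < ((n:ℝ) + 1) ^ 2 - t ^ 2 := den_pos ht1 ht0 n
    field_simp
    ring_nf
  have hint : IntervalIntegrable (uu n) volume 0 z := by
    apply ContinuousOn.intervalIntegrable
    rw [Set.uIcc_of_le h0.le]
    exact uu_contOn h0 h1 n
  have := intervalIntegral.integral_eq_sub_of_hasDerivAt hderiv hint
  rw [this, hG]
  simp

lemma integral_eq {z : ℝ} (h0 : 0 < z) (h1 : z < 1) :
    (∫ t in (0:ℝ)..z, π * t * (Real.cos (π * t) / Real.sin (π * t)))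
      = z + ∑' n : ℕ, (((n:ℝ) + 1) * (Real.log (1 - z / ((n:ℝ) + 1))
          - Real.log (1 + z / ((n:ℝ) + 1))) + 2 * z) := by
  set S : ℝ → ℝ := fun t => ∑' n : ℕ, uu n t with hS
  have hScont : ContinuousOn S (Set.Icc (0:ℝ) z) := by
    have hunif := tendstoUniformlyOn_tsum_nat (summable_ubound h0 h1)
      (fun n t ht => uu_bound h0 h1 ht n)
    apply hunif.continuousOn
    apply Filter.Eventually.frequently
    apply Filter.Eventually.of_forall
    intro N
    exact continuousOn_finset_sum (Finset.range N) (fun n _ => uu_contOn h0 h1 n)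
  have hSint : IntegrableOn S (Set.Ioc 0 z) volume :=
    (hScont.integrableOn_Icc).mono_set Set.Ioc_subset_Icc_self
  rw [intervalIntegral.integral_of_le h0.le]
  have hcongr : ∫ t in Set.Ioc (0:ℝ) z, π * t * (Real.cos (π * t) / Real.sin (π * t))
      = ∫ t in Set.Ioc (0:ℝ) z, (1 + S t) := by
    apply setIntegral_congr_fun measurableSet_Ioc
    intro t ht
    exact cot_expansion ht.1 (lt_of_le_of_lt ht.2 h1)
  rw [hcongr]
  have hvol : volume (Set.Ioc (0:ℝ) z) < ⊤ := by
    rw [Real.volume_Ioc]; exact ENNReal.ofReal_lt_top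
  have hconst : IntegrableOn (fun _ : ℝ => (1:ℝ)) (Set.Ioc 0 z) volume :=
    integrableOn_const hvol.ne
  rw [integral_add hconst hSint]
  congr 1
  · rw [setIntegral_const, measureReal_def, Real.volume_Ioc, smul_eq_mul, mul_one,
      ENNReal.toReal_ofReal (by linarith)]
    ring
  -- swap sum and integral
  have hint : ∀ n : ℕ, Integrable (uu n) (volume.restrict (Set.Ioc (0:ℝ) z)) := by
    intro n
    exact ((uu_contOn h0 h1 n).integrableOn_Icc).mono_set Set.Ioc_subset_Icc_self
  have hsum : Summable (fun n : ℕ => ∫ t in Set.Ioc (0:ℝ) z, ‖uu n t‖) := by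
    apply Summable.of_nonneg_of_le (fun n => integral_nonneg (fun t => norm_nonneg _))
      (fun n => ?_) ((summable_ubound h0 h1).mul_right z)
    have hb : ∀ t ∈ Set.Ioc (0:ℝ) z, ‖‖uu n t‖‖ ≤ 2 * z ^ 2 / (((n:ℝ) + 1) ^ 2 - z ^ 2) := by
      intro t ht
      rw [norm_norm]
      exact uu_bound h0 h1 (Set.mem_Icc.2 ⟨ht.1.le, ht.2⟩) n
    have := norm_setIntegral_le_of_norm_le_const hvol hb
    calc (∫ t in Set.Ioc (0:ℝ) z, ‖uu n t‖)
        ≤ ‖∫ t in Set.Ioc (0:ℝ) z, ‖uu n t‖‖ := le_abs_self _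
      _ ≤ 2 * z ^ 2 / (((n:ℝ) + 1) ^ 2 - z ^ 2) * (volume (Set.Ioc (0:ℝ) z)).toReal := this
      _ = 2 * z ^ 2 / (((n:ℝ) + 1) ^ 2 - z ^ 2) * z := by
          rw [Real.volume_Ioc, ENNReal.toReal_ofReal (by linarith)]; ring_nf
  have hswap := integral_tsum_of_summable_integral_norm hint hsum
  rw [hS, ← hswap]
  apply tsum_congr
  intro n
  rw [← intervalIntegral.integral_of_le h0.le, per_term_integral h0 h1 n]

/-- Reflection formula for the Barnes G-function:
`G(1-z) = G(1+z) (2π)^{-z} exp(∫₀^z π t cot(π t) dt)` for `0 < z < 1`. -/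
theorem barnesG_reflection (z : ℝ) (h0 : 0 < z) (h1 : z < 1) :
    GG (-z) = GG z * (2 * π) ^ (-z) *
      Real.exp (∫ t in (0:ℝ)..z, π * t * (Real.cos (π * t) / Real.sin (π * t))) := by
  rw [GG_ratio h0 h1, integral_eq h0 h1]
  have hts : (∑' n : ℕ, (l (-z) n - l z n))
      = ∑' n : ℕ, (((n:ℝ) + 1) * (Real.log (1 - z / ((n:ℝ) + 1))
          - Real.log (1 + z / ((n:ℝ) + 1))) + 2 * z) := by
    apply tsum_congr
    intro n
    simp only [l]
    have hneg : 1 + -z / ((n:ℝ) + 1) = 1 - z / ((n:ℝ) + 1) := by ring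
    rw [hneg]
    ring
  rw [hts]
end

section
/- For real z with |z| < 1, the quotient formula G(1-z)/G(1+z) = e^z (2π)^{-z} · ∏_{n=1}^∞ (1 - z/n)^n (1 + z/n)^{-n} e^{2z} holds. -/
open Real

/-- Logarithm of the `n`-th Weierstrass factor. -/
noncomputable def Lw (w : ℝ) (n : ℕ) : ℝ :=
  ((n : ℝ) + 1) * Real.log (1 + w / ((n : ℝ) + 1)) + (-w + w ^ 2 / (2 * ((n : ℝ) + 1)))

lemma base_pos {w : ℝ} (hw : |w| < 1) (n : ℕ) : 0 < 1 + w / ((n : ℝ) + 1) := by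
  have hm : (1 : ℝ) ≤ (n : ℝ) + 1 := by
    have := Nat.cast_nonneg (α := ℝ) n; linarith
  have h : |w / ((n : ℝ) + 1)| < 1 := by
    rw [abs_div, abs_of_pos (by linarith : (0:ℝ) < (n:ℝ) + 1)]
    calc |w| / ((n:ℝ)+1) ≤ |w| / 1 := by
          apply div_le_div_of_nonneg_left (abs_nonneg w) one_pos hm
      _ = |w| := by ring
      _ < 1 := hw
  have := (abs_lt.mp h).1
  linarith

lemma Lw_bound {w : ℝ} (hw : |w| < 1) (n : ℕ) :
    |Lw w n| ≤ 1 / (1 - |w|) * (1 / ((n : ℝ) + 1) ^ 2) := by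
  set m : ℝ := (n : ℝ) + 1 with hmdef
  have hm1 : 1 ≤ m := by
    have := Nat.cast_nonneg (α := ℝ) n; simp only [hmdef]; linarith
  have hm0 : 0 < m := by linarith
  set x : ℝ := -w / m with hxdef
  have hxa : |x| = |w| / m := by rw [hxdef, abs_div, abs_neg, abs_of_pos hm0]
  have hx1 : |x| < 1 := by
    rw [hxa]
    calc |w| / m ≤ |w| / 1 := div_le_div_of_nonneg_left (abs_nonneg w) one_pos hm1
      _ = |w| := by ring
      _ < 1 := hw
  have key := abs_log_sub_add_sum_range_le hx1 2
  have hsum2 : (∑ i ∈ Finset.range 2, x ^ (i + 1) / (i + 1)) = x + x ^ 2 / 2 := by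
    norm_num [Finset.sum_range_succ]
  rw [hsum2] at key
  have h1x : 1 - x = 1 + w / m := by rw [hxdef]; ring
  rw [h1x] at key
  have hL : Lw w n = m * (x + x ^ 2 / 2 + Real.log (1 + w / m)) := by
    rw [Lw, hxdef]
    field_simp
    ring
  rw [hL, abs_mul, abs_of_pos hm0]
  have step1 : m * |x + x ^ 2 / 2 + Real.log (1 + w / m)| ≤ m * (|x| ^ (2 + 1) / (1 - |x|)) :=
    mul_le_mul_of_nonneg_left key hm0.le
  refine step1.trans ?_
  rw [hxa]
  set a := |w| with hadef
  have ha0 : 0 ≤ a := abs_nonneg w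
  have ha1 : a < 1 := hw
  have hma : 0 < m - a := by linarith
  have e : m * ((a / m) ^ (2 + 1) / (1 - a / m)) = a ^ 3 / (m * (m - a)) := by
    field_simp
    ring_nf
    field_simp
  rw [e]
  have h1a : (0:ℝ) < 1 - a := by linarith
  have key2 : a ^ 3 / (m * (m - a)) ≤ 1 / ((1 - a) * m ^ 2) := by
    rw [div_le_div_iff₀ (mul_pos hm0 hma) (mul_pos h1a (pow_pos hm0 2))]
    have k1 : a ^ 3 ≤ 1 := pow_le_one₀ ha0 ha1.le
    have k2 : (1 - a) * m ≤ m - a := by nlinarith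
    nlinarith [mul_pos hm0 hma, sq_nonneg m, mul_le_mul_of_nonneg_left k2 (pow_pos hm0 2).le,
      mul_nonneg (mul_nonneg h1a.le (pow_pos hm0 2).le) (sub_nonneg.mpr k1)]
  exact key2.trans_eq (one_div_mul_one_div _ _).symm

lemma Lw_summable {w : ℝ} (hw : |w| < 1) : Summable (Lw w) := by
  have hS : Summable (fun n : ℕ => 1 / (1 - |w|) * (1 / ((n : ℝ) + 1) ^ 2)) := by
    apply Summable.mul_left
    have h2 : Summable (fun n : ℕ => 1 / ((n : ℝ)) ^ 2) :=
      Real.summable_one_div_nat_pow.mpr one_lt_two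
    have h3 := (summable_nat_add_iff 1).mpr h2
    simpa using h3
  exact Summable.of_abs (hS.of_nonneg_of_le (fun n => abs_nonneg _) (fun n => Lw_bound hw n))

lemma gterm_eq {w : ℝ} (hw : |w| < 1) (n : ℕ) :
    (1 + w / ((n : ℝ) + 1)) ^ (n + 1) * Real.exp (-w + w ^ 2 / (2 * ((n : ℝ) + 1))) =
      Real.exp (Lw w n) := by
  have hb := base_pos hw n
  have h1 : Real.exp (Lw w n) =
      (1 + w / ((n : ℝ) + 1)) ^ (n + 1) * Real.exp (-w + w ^ 2 / (2 * ((n : ℝ) + 1))) := by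
    rw [Lw, Real.exp_add]
    congr 1
    rw [show ((n : ℝ) + 1) * Real.log (1 + w / ((n : ℝ) + 1)) =
        Real.log ((1 + w / ((n : ℝ) + 1)) ^ (n + 1)) by rw [Real.log_pow]; push_cast; ring,
      Real.exp_log (pow_pos hb _)]
  exact h1.symm

lemma hasProd_g {w : ℝ} (hw : |w| < 1) :
    HasProd (fun n : ℕ => (1 + w / ((n : ℝ) + 1)) ^ (n + 1) *
        Real.exp (-w + w ^ 2 / (2 * ((n : ℝ) + 1))))
      (Real.exp (∑' n, Lw w n)) := by
  have h := ((Lw_summable hw).hasSum).rexp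
  simpa only [Function.comp_def, ← gterm_eq hw] using h

/-- For `|z| < 1`,
`G(1-z)/G(1+z) = e^z (2π)^{-z} ∏_{n≥1} (1 - z/n)^n (1 + z/n)^{-n} e^{2z}`. -/
theorem barnesG_quotient_formula (z : ℝ) (hz : |z| < 1) :
    GG (-z) / GG z =
      Real.exp z * (2 * π) ^ (-z) *
        ∏' n : ℕ, (1 - z / (n + 1)) ^ (n + 1) * ((1 + z / (n + 1)) ^ (n + 1))⁻¹ *
          Real.exp (2 * z) := by
  have hz' : |(-z)| < 1 := by rwa [abs_neg]
  have h2π : (0 : ℝ) < 2 * π := by positivity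
  have hPmz := hasProd_g hz'
  have hPz := hasProd_g hz
  have hT : HasProd (fun n : ℕ => (1 - z / ((n : ℝ) + 1)) ^ (n + 1) *
        ((1 + z / ((n : ℝ) + 1)) ^ (n + 1))⁻¹ * Real.exp (2 * z))
      (Real.exp ((∑' n, Lw (-z) n) - ∑' n, Lw z n)) := by
    have h := (((Lw_summable hz').hasSum).sub ((Lw_summable hz).hasSum)).rexp
    have he : ∀ n : ℕ, (1 - z / ((n : ℝ) + 1)) ^ (n + 1) *
          ((1 + z / ((n : ℝ) + 1)) ^ (n + 1))⁻¹ * Real.exp (2 * z) =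
        Real.exp (Lw (-z) n - Lw z n) := by
      intro n
      have h1 := gterm_eq hz' n
      have h2 := gterm_eq hz n
      have hbz := base_pos hz n
      have e0 : (1 + -z / ((n : ℝ) + 1)) = 1 - z / ((n : ℝ) + 1) := by ring
      have e1 : -(-z) + (-z) ^ 2 / (2 * ((n : ℝ) + 1)) = z + z ^ 2 / (2 * ((n : ℝ) + 1)) := by
        ring
      rw [e0, e1] at h1
      rw [Real.exp_sub, ← h1, ← h2]
      have hden : (1 + z / ((n:ℝ)+1)) ^ (n+1) * Real.exp (-z + z ^ 2 / (2 * ((n:ℝ)+1))) ≠ 0 :=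
        mul_ne_zero (pow_ne_zero _ hbz.ne') (Real.exp_ne_zero _)
      rw [eq_div_iff hden]
      have hpne : ((1 + z / ((n:ℝ)+1)) ^ (n+1) : ℝ) ≠ 0 := pow_ne_zero _ hbz.ne'
      have hexp : Real.exp (2 * z) * Real.exp (-z + z ^ 2 / (2 * ((n:ℝ)+1))) =
          Real.exp (z + z ^ 2 / (2 * ((n:ℝ)+1))) := by rw [← Real.exp_add]; ring_nf
      calc (1 - z / ((n:ℝ)+1)) ^ (n+1) * ((1 + z / ((n:ℝ)+1)) ^ (n+1))⁻¹ * Real.exp (2*z) *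
            ((1 + z / ((n:ℝ)+1)) ^ (n+1) * Real.exp (-z + z ^ 2 / (2 * ((n:ℝ)+1))))
          = (1 - z / ((n:ℝ)+1)) ^ (n+1) *
              (((1 + z / ((n:ℝ)+1)) ^ (n+1))⁻¹ * (1 + z / ((n:ℝ)+1)) ^ (n+1)) *
              (Real.exp (2*z) * Real.exp (-z + z ^ 2 / (2 * ((n:ℝ)+1)))) := by ring
        _ = (1 - z / ((n:ℝ)+1)) ^ (n+1) * Real.exp (z + z ^ 2 / (2 * ((n:ℝ)+1))) := by
            rw [inv_mul_cancel₀ hpne, hexp]; ring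
    exact (h.congr_fun he).congr_fun (fun n => rfl)
  simp only [GG]
  rw [hPmz.tprod_eq, hPz.tprod_eq, hT.tprod_eq]
  rw [Real.rpow_def_of_pos h2π (-z / 2), Real.rpow_def_of_pos h2π (z / 2),
    Real.rpow_def_of_pos h2π (-z)]
  simp only [← Real.exp_add, ← Real.exp_sub]
  exact congrArg Real.exp (by ring)
end

section
/- The operators L_b := (u+v)·b·∂/∂p_b + Σ_{j≥1} (b+j)·(p_j - δ_{j,1})·∂/∂p_{b+j} + ε^{-2}·Σ_{i+j=b, i,j≥1} i·j·∂²/∂p_i∂p_j + ε^{-2}·uv·δ_{b,0}, acting on formal power series in the variables p_1, p_2, …, satisfy the Virasoro commutation relations [L_{b1}, L_{b2}] = (b1 - b2)·L_{b1+b2} for all b1, b2 ≥ 0. -/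
open MvPolynomial

noncomputable section VirasoroAux
abbrev PP := MvPolynomial ℕ ℝ

def dop (i : ℕ) : Module.End ℝ PP := (pderiv i).toLinearMap

def qv (j : ℕ) : PP := X j - if j = 1 then 1 else 0

def mop (j : ℕ) : Module.End ℝ PP := LinearMap.mulLeft ℝ (qv j)

@[simp] lemma dop_apply (i : ℕ) (f : PP) : dop i f = pderiv i f := rfl
@[simp] lemma mop_apply (j : ℕ) (f : PP) : mop j f = qv j * f := rfl

lemma pderiv_comm' (i j : ℕ) (f : PP) :
    pderiv i (pderiv j f) = pderiv j (pderiv i f) := by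
  induction f using MvPolynomial.induction_on with
  | C a => simp
  | add p q hp hq => simp [hp, hq]
  | mul_X p n hp =>
    simp only [pderiv_mul, map_add, pderiv_X, Pi.single_apply, apply_ite (pderiv _),
      map_zero, map_one, hp]
    split <;> split <;> simp <;> ring

lemma dd_comm (i j : ℕ) : dop i * dop j = dop j * dop i := by
  refine LinearMap.ext fun f => ?_
  simp [Module.End.mul_apply, pderiv_comm']

lemma mm_comm (i j : ℕ) : mop i * mop j = mop j * mop i := by
  refine LinearMap.ext fun f => ?_
  simp [Module.End.mul_apply, mul_left_comm]

lemma pderiv_qv (a j : ℕ) : pderiv a (qv j) = if a = j then 1 else 0 := by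
  unfold qv
  rcases eq_or_ne a j with h | h
  · subst h; simp [pderiv_X_self]; split <;> simp
  · simp [h, pderiv_X_of_ne (Ne.symm h)]
    split <;> simp

lemma dm_comm (a j : ℕ) :
    dop a * mop j = mop j * dop a + (if a = j then (1:ℝ) else 0) • 1 := by
  refine LinearMap.ext fun f => ?_
  simp only [LinearMap.add_apply, Module.End.mul_apply, dop_apply, mop_apply,
    LinearMap.smul_apply, Module.End.one_apply, pderiv_mul, pderiv_qv]
  split <;> simp <;> ring

/-- commutator -/
def cm (A B : Module.End ℝ PP) : Module.End ℝ PP := A * B - B * A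

lemma cm_of_commute {A B : Module.End ℝ PP} (h : Commute A B) : cm A B = 0 := by
  simp [cm, h.eq]

lemma cm_antisymm (A B : Module.End ℝ PP) : cm A B = - cm B A := by
  simp only [cm, neg_sub]

lemma cm_smul_left (c : ℝ) (A B : Module.End ℝ PP) : cm (c • A) B = c • cm A B := by
  simp [cm, smul_mul_assoc, mul_smul_comm, smul_sub]

lemma cm_smul_right (c : ℝ) (A B : Module.End ℝ PP) : cm A (c • B) = c • cm A B := by
  simp [cm, smul_mul_assoc, mul_smul_comm, smul_sub]

lemma cm_add_left (A B C : Module.End ℝ PP) : cm (A + B) C = cm A C + cm B C := by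
  simp [cm, add_mul, mul_add]; abel

lemma cm_add_right (A B C : Module.End ℝ PP) : cm A (B + C) = cm A B + cm A C := by
  simp [cm, add_mul, mul_add]; abel

lemma cm_sum_left {α : Type*} (s : Finset α) (g : α → Module.End ℝ PP) (B : Module.End ℝ PP) :
    cm (∑ j ∈ s, g j) B = ∑ j ∈ s, cm (g j) B := by
  simp [cm, Finset.sum_mul, Finset.mul_sum, Finset.sum_sub_distrib]

lemma cm_sum_right {α : Type*} (s : Finset α) (g : α → Module.End ℝ PP) (A : Module.End ℝ PP) :
    cm A (∑ j ∈ s, g j) = ∑ j ∈ s, cm A (g j) := by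
  simp [cm, Finset.sum_mul, Finset.mul_sum, Finset.sum_sub_distrib]

lemma commute_smul_one (c : ℝ) (A : Module.End ℝ PP) : Commute (c • 1) A := by
  unfold Commute SemiconjBy
  simp [smul_mul_assoc, mul_smul_comm]

-- helpers for right-associated rewriting
lemma d_mul_m_mul (a k : ℕ) (x : Module.End ℝ PP) :
    dop a * (mop k * x) = mop k * (dop a * x) + (if a = k then (1:ℝ) else 0) • x := by
  rw [← mul_assoc, dm_comm, add_mul, smul_mul_assoc, one_mul, mul_assoc]

lemma d_mul_d_mul (a c : ℕ) (x : Module.End ℝ PP) :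
    dop a * (dop c * x) = dop c * (dop a * x) := by
  rw [← mul_assoc, dd_comm, mul_assoc]

lemma m_mul_m_mul (a c : ℕ) (x : Module.End ℝ PP) :
    mop a * (mop c * x) = mop c * (mop a * x) := by
  rw [← mul_assoc, mm_comm, mul_assoc]

lemma cm_d_md (a j c : ℕ) :
    cm (dop a) (mop j * dop c) = (if a = j then (1:ℝ) else 0) • dop c := by
  unfold cm
  rw [d_mul_m_mul, mul_assoc, dd_comm c a, ← mul_assoc]
  abel

lemma cm_md_md (j a k c : ℕ) :
    cm (mop j * dop a) (mop k * dop c) =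
      (if a = k then (1:ℝ) else 0) • (mop j * dop c)
        - (if c = j then (1:ℝ) else 0) • (mop k * dop a) := by
  unfold cm
  rw [mul_assoc (mop j), d_mul_m_mul, mul_add, mul_smul_comm,
      mul_assoc (mop k), d_mul_m_mul, mul_add, mul_smul_comm,
      m_mul_m_mul k j, dd_comm c a]
  abel

lemma cm_dd_md (a c k e : ℕ) :
    cm (dop a * dop c) (mop k * dop e) =
      (if a = k then (1:ℝ) else 0) • (dop c * dop e)
        + (if c = k then (1:ℝ) else 0) • (dop a * dop e) := by
  unfold cm
  rw [mul_assoc (dop a), d_mul_m_mul c k, mul_add, mul_smul_comm,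
      d_mul_m_mul a k, mul_assoc (mop k), d_mul_d_mul e a, dd_comm e c]
  abel


@[simp] lemma end_ite_apply (P : Prop) [Decidable P] (A B : Module.End ℝ PP) (f : PP) :
    (if P then A else B) f = if P then A f else B f := by split <;> rfl

def Wop (b N : ℕ) : Module.End ℝ PP :=
  ∑ j ∈ Finset.Icc 1 N, ((b + j : ℕ) : ℝ) • (mop j * dop (b + j))

def Gop (b : ℕ) : Module.End ℝ PP :=
  ∑ i ∈ Finset.Ioo 0 b, ((i * (b - i) : ℕ) : ℝ) • (dop i * dop (b - i))

def Eop (u v ε : ℝ) (b N : ℕ) : Module.End ℝ PP :=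
  ((u + v) * (b : ℝ)) • dop b + Wop b N + (ε ^ 2)⁻¹ • Gop b
    + (if b = 0 then (ε ^ 2)⁻¹ * (u * v) else 0) • 1

lemma cm_d_W (b₁ b₂ N : ℕ) (h1 : 1 ≤ b₁) (h2 : b₁ ≤ N) :
    cm (dop b₁) (Wop b₂ N) = ((b₂ + b₁ : ℕ) : ℝ) • dop (b₂ + b₁) := by
  rw [Wop, cm_sum_right]
  have key : ∀ j ∈ Finset.Icc 1 N,
      cm (dop b₁) (((b₂ + j : ℕ) : ℝ) • (mop j * dop (b₂ + j)))
        = if j = b₁ then ((b₂ + j : ℕ) : ℝ) • dop (b₂ + j) else 0 := by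
    intro j hj
    rw [cm_smul_right, cm_d_md]
    rcases eq_or_ne j b₁ with h | h
    · subst h; simp
    · simp [h, Ne.symm h]
  rw [Finset.sum_congr rfl key, Finset.sum_ite_eq' (Finset.Icc 1 N) b₁]
  rw [if_pos (Finset.mem_Icc.mpr ⟨h1, h2⟩)]

lemma cm_A_W (u v : ℝ) (b₁ b₂ N : ℕ) (h2 : b₁ ≤ N) :
    cm (((u + v) * (b₁ : ℝ)) • dop b₁) (Wop b₂ N)
      = ((u + v) * (b₁ : ℝ) * ((b₁ + b₂ : ℕ) : ℝ)) • dop (b₁ + b₂) := by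
  rw [cm_smul_left]
  rcases Nat.eq_zero_or_pos b₁ with h | h
  · subst h; simp
  · rw [cm_d_W b₁ b₂ N h h2, Nat.add_comm b₂ b₁, smul_smul]

def SS (b₁ b₂ N : ℕ) : Module.End ℝ PP :=
  ∑ j ∈ Finset.Icc 1 N, if b₁ + j ≤ N then
    (((b₁ + j) * (b₁ + b₂ + j) : ℕ) : ℝ) • (mop j * dop (b₁ + b₂ + j)) else 0

lemma cm_W_W (b₁ b₂ N : ℕ) :
    cm (Wop b₁ N) (Wop b₂ N) = SS b₁ b₂ N - SS b₂ b₁ N := by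
  have expand : cm (Wop b₁ N) (Wop b₂ N)
      = (∑ j ∈ Finset.Icc 1 N, ∑ k ∈ Finset.Icc 1 N,
          (if k = b₁ + j then
            (((b₁ + j : ℕ) : ℝ) * ((b₂ + k : ℕ) : ℝ)) • (mop j * dop (b₂ + k)) else 0))
        - (∑ j ∈ Finset.Icc 1 N, ∑ k ∈ Finset.Icc 1 N,
          (if j = b₂ + k then
            (((b₁ + j : ℕ) : ℝ) * ((b₂ + k : ℕ) : ℝ)) • (mop k * dop (b₁ + j)) else 0)) := by
    rw [Wop, Wop, cm_sum_left, ← Finset.sum_sub_distrib]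
    refine Finset.sum_congr rfl fun j hj => ?_
    rw [cm_sum_right, ← Finset.sum_sub_distrib]
    refine Finset.sum_congr rfl fun k hk => ?_
    rw [cm_smul_left, cm_smul_right, cm_md_md, smul_sub, smul_smul, smul_smul]
    rcases eq_or_ne k (b₁ + j) with h1 | h1 <;> rcases eq_or_ne j (b₂ + k) with h2 | h2
    · rw [if_pos h1.symm, if_pos h2.symm, if_pos h1, if_pos h2]
      simp [smul_sub, smul_smul]
    · rw [if_pos h1.symm, if_neg (fun hh => h2 hh.symm), if_pos h1, if_neg h2]
      simp [smul_sub, smul_smul]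
    · rw [if_neg (fun hh => h1 hh.symm), if_pos h2.symm, if_neg h1, if_pos h2]
      simp [smul_sub, smul_smul]
    · rw [if_neg (fun hh => h1 hh.symm), if_neg (fun hh => h2 hh.symm), if_neg h1, if_neg h2]
      simp
  rw [expand]
  have first : (∑ j ∈ Finset.Icc 1 N, ∑ k ∈ Finset.Icc 1 N,
      (if k = b₁ + j then
        (((b₁ + j : ℕ) : ℝ) * ((b₂ + k : ℕ) : ℝ)) • (mop j * dop (b₂ + k)) else 0))
      = SS b₁ b₂ N := by
    refine Finset.sum_congr rfl fun j hj => ?_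
    rw [Finset.sum_ite_eq' (Finset.Icc 1 N) (b₁ + j)]
    simp only [Finset.mem_Icc] at hj
    have hidx : b₂ + (b₁ + j) = b₁ + b₂ + j := by omega
    simp only [hidx, Finset.mem_Icc]
    have hc : (1 ≤ b₁ + j ∧ b₁ + j ≤ N) ↔ b₁ + j ≤ N := by omega
    rw [if_congr hc rfl rfl]
    split
    · congr 1; push_cast; ring
    · rfl
  have second : (∑ j ∈ Finset.Icc 1 N, ∑ k ∈ Finset.Icc 1 N,
      (if j = b₂ + k then
        (((b₁ + j : ℕ) : ℝ) * ((b₂ + k : ℕ) : ℝ)) • (mop k * dop (b₁ + j)) else 0))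
      = SS b₂ b₁ N := by
    rw [Finset.sum_comm]
    refine Finset.sum_congr rfl fun k hk => ?_
    rw [Finset.sum_ite_eq' (Finset.Icc 1 N) (b₂ + k)]
    simp only [Finset.mem_Icc] at hk
    have hidx : b₁ + (b₂ + k) = b₂ + b₁ + k := by omega
    simp only [hidx, Finset.mem_Icc]
    have hc : (1 ≤ b₂ + k ∧ b₂ + k ≤ N) ↔ b₂ + k ≤ N := by omega
    rw [if_congr hc rfl rfl]
    split
    · congr 1; push_cast; ring
    · rfl
  rw [first, second]


lemma cm_W_W_apply (b₁ b₂ N : ℕ) (f : PP) (hN : ∀ m, N < m → pderiv m f = 0) :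
    cm (Wop b₁ N) (Wop b₂ N) f = (((b₁ : ℝ) - (b₂ : ℝ)) • Wop (b₁ + b₂) N) f := by
  rw [cm_W_W]
  simp only [LinearMap.sub_apply, LinearMap.smul_apply, Wop, SS, LinearMap.sum_apply,
    Finset.smul_sum, end_ite_apply, LinearMap.zero_apply]
  rw [← Finset.sum_sub_distrib]
  refine Finset.sum_congr rfl fun j hj => ?_
  simp only [Finset.mem_Icc] at hj
  have hidx : b₂ + b₁ + j = b₁ + b₂ + j := by omega
  rw [hidx]
  by_cases h1 : b₁ + j ≤ N <;> by_cases h2 : b₂ + j ≤ N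
  · rw [if_pos h1, if_pos h2, ← sub_smul, smul_smul]
    congr 1
    push_cast
    ring
  · have hz : pderiv (b₁ + b₂ + j) f = 0 := hN _ (by omega)
    rw [if_pos h1, if_neg h2]
    simp [Module.End.mul_apply, hz]
  · have hz : pderiv (b₁ + b₂ + j) f = 0 := hN _ (by omega)
    rw [if_neg h1, if_pos h2]
    simp [Module.End.mul_apply, hz]
  · have hz : pderiv (b₁ + b₂ + j) f = 0 := hN _ (by omega)
    rw [if_neg h1, if_neg h2]
    simp [Module.End.mul_apply, hz]

lemma cm_G_W (b₁ b₂ N : ℕ) (h : b₁ ≤ N) :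
    cm (Gop b₁) (Wop b₂ N)
      = ∑ i ∈ Finset.Ioo 0 b₁,
          ((2 * (i * ((b₁ - i) * (b₁ + b₂ - i))) : ℕ) : ℝ) • (dop i * dop (b₁ + b₂ - i)) := by
  rw [Gop, cm_sum_left]
  have key : ∀ i ∈ Finset.Ioo 0 b₁,
      cm (((i * (b₁ - i) : ℕ) : ℝ) • (dop i * dop (b₁ - i))) (Wop b₂ N)
        = ((i * (b₁ - i) * (b₂ + i) : ℕ) : ℝ) • (dop (b₁ - i) * dop (b₂ + i))
          + ((i * (b₁ - i) * (b₂ + (b₁ - i)) : ℕ) : ℝ) • (dop i * dop (b₂ + (b₁ - i))) := by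
    intro i hi
    simp only [Finset.mem_Ioo] at hi
    rw [cm_smul_left, Wop, cm_sum_right]
    have inner : ∀ k ∈ Finset.Icc 1 N,
        cm (dop i * dop (b₁ - i)) (((b₂ + k : ℕ) : ℝ) • (mop k * dop (b₂ + k)))
          = (if k = i then ((b₂ + k : ℕ) : ℝ) • (dop (b₁ - i) * dop (b₂ + k)) else 0)
            + (if k = b₁ - i then ((b₂ + k : ℕ) : ℝ) • (dop i * dop (b₂ + k)) else 0) := by
      intro k hk
      rw [cm_smul_right, cm_dd_md, smul_add, smul_smul, smul_smul]
      rcases eq_or_ne k i with e1 | e1 <;> rcases eq_or_ne k (b₁ - i) with e2 | e2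
      · rw [if_pos e1.symm, if_pos e2.symm, if_pos e1, if_pos e2]; simp [smul_smul]
      · rw [if_pos e1.symm, if_neg (fun hh => e2 hh.symm), if_pos e1, if_neg e2]
        simp [smul_smul]
      · rw [if_neg (fun hh => e1 hh.symm), if_pos e2.symm, if_neg e1, if_pos e2]
        simp [smul_smul]
      · rw [if_neg (fun hh => e1 hh.symm), if_neg (fun hh => e2 hh.symm), if_neg e1, if_neg e2]
        simp
    rw [Finset.sum_congr rfl inner, Finset.sum_add_distrib,
      Finset.sum_ite_eq' (Finset.Icc 1 N) i, Finset.sum_ite_eq' (Finset.Icc 1 N) (b₁ - i),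
      if_pos (Finset.mem_Icc.mpr ⟨by omega, by omega⟩),
      if_pos (Finset.mem_Icc.mpr ⟨by omega, by omega⟩), smul_add, smul_smul, smul_smul]
    congr 2 <;> · push_cast; ring
  rw [Finset.sum_congr rfl key, Finset.sum_add_distrib]
  have reidx : (∑ i ∈ Finset.Ioo 0 b₁,
      ((i * (b₁ - i) * (b₂ + i) : ℕ) : ℝ) • (dop (b₁ - i) * dop (b₂ + i)))
      = ∑ i ∈ Finset.Ioo 0 b₁,
        ((i * (b₁ - i) * (b₂ + (b₁ - i)) : ℕ) : ℝ) • (dop i * dop (b₂ + (b₁ - i))) := by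
    refine Finset.sum_nbij' (fun i => b₁ - i) (fun i => b₁ - i) ?_ ?_ ?_ ?_ ?_
    · intro a ha; simp only [Finset.mem_Ioo] at *; omega
    · intro a ha; simp only [Finset.mem_Ioo] at *; omega
    · intro a ha; simp only [Finset.mem_Ioo] at ha; show b₁ - (b₁ - a) = a; omega
    · intro a ha; simp only [Finset.mem_Ioo] at ha; show b₁ - (b₁ - a) = a; omega
    · intro a ha
      simp only [Finset.mem_Ioo] at ha
      have e1 : b₁ - (b₁ - a) = a := by omega
      rw [e1]
      congr 2
      · push_cast [Nat.cast_sub (by omega : a ≤ b₁)]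
        ring
  rw [reidx, ← Finset.sum_add_distrib]
  refine Finset.sum_congr rfl fun i hi => ?_
  simp only [Finset.mem_Ioo] at hi
  have e1 : b₂ + (b₁ - i) = b₁ + b₂ - i := by omega
  rw [e1, ← add_smul]
  congr 1
  push_cast
  ring


lemma half_sum (b c : ℕ) :
    (∑ i ∈ Finset.Ioo 0 b,
        ((2 * (i * ((b - i) * (b + c - i))) : ℕ) : ℝ) • (dop i * dop (b + c - i)))
      = (∑ i ∈ Finset.Ioo 0 (b + c),
          ((i * ((b - i) * (b + c - i)) : ℕ) : ℝ) • (dop i * dop (b + c - i)))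
        + (∑ i ∈ Finset.Ioo 0 (b + c),
          (((b + c - i) * ((i - c) * i) : ℕ) : ℝ) • (dop i * dop (b + c - i))) := by
  have e1 : ∀ i ∈ Finset.Ioo 0 b,
      ((2 * (i * ((b - i) * (b + c - i))) : ℕ) : ℝ) • (dop i * dop (b + c - i))
        = ((i * ((b - i) * (b + c - i)) : ℕ) : ℝ) • (dop i * dop (b + c - i))
          + ((i * ((b - i) * (b + c - i)) : ℕ) : ℝ) • (dop i * dop (b + c - i)) := by
    intro i hi
    rw [← add_smul]
    congr 1
    push_cast
    ring
  rw [Finset.sum_congr rfl e1, Finset.sum_add_distrib]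
  congr 1
  · refine Finset.sum_subset (Finset.Ioo_subset_Ioo le_rfl (Nat.le_add_right b c))
      fun i hi hni => ?_
    have : b - i = 0 := by
      simp only [Finset.mem_Ioo] at hi hni
      omega
    simp [this]
  · have r1 : (∑ i ∈ Finset.Ioo 0 b,
        ((i * ((b - i) * (b + c - i)) : ℕ) : ℝ) • (dop i * dop (b + c - i)))
        = ∑ i ∈ Finset.Ioo c (b + c),
          (((b + c - i) * ((i - c) * i) : ℕ) : ℝ) • (dop i * dop (b + c - i)) := by
      refine Finset.sum_nbij' (fun i => b + c - i) (fun i => b + c - i) ?_ ?_ ?_ ?_ ?_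
      · intro a ha; simp only [Finset.mem_Ioo] at *; omega
      · intro a ha; simp only [Finset.mem_Ioo] at *; omega
      · intro a ha; simp only [Finset.mem_Ioo] at ha; show b + c - (b + c - a) = a; omega
      · intro a ha; simp only [Finset.mem_Ioo] at ha; show b + c - (b + c - a) = a; omega
      · intro a ha
        simp only [Finset.mem_Ioo] at ha
        have i1 : b + c - (b + c - a) = a := by omega
        have i2 : b + c - a - c = b - a := by omega
        rw [i1, i2, dd_comm]
    rw [r1]
    refine Finset.sum_subset (Finset.Ioo_subset_Ioo (Nat.zero_le c) le_rfl)
      fun i hi hni => ?_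
    have : i - c = 0 := by
      simp only [Finset.mem_Ioo] at hi hni
      omega
    simp [this]

lemma GW_sym (b₁ b₂ : ℕ) :
    (∑ i ∈ Finset.Ioo 0 b₁,
        ((2 * (i * ((b₁ - i) * (b₁ + b₂ - i))) : ℕ) : ℝ) • (dop i * dop (b₁ + b₂ - i)))
      - (∑ i ∈ Finset.Ioo 0 b₂,
        ((2 * (i * ((b₂ - i) * (b₂ + b₁ - i))) : ℕ) : ℝ) • (dop i * dop (b₂ + b₁ - i)))
      = ((b₁ : ℝ) - (b₂ : ℝ)) • Gop (b₁ + b₂) := by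
  rw [half_sum b₁ b₂, half_sum b₂ b₁]
  simp only [Nat.add_comm b₂ b₁]
  rw [Gop, Finset.smul_sum, ← Finset.sum_add_distrib, ← Finset.sum_add_distrib,
    ← Finset.sum_sub_distrib]
  refine Finset.sum_congr rfl fun i hi => ?_
  simp only [Finset.mem_Ioo] at hi
  rw [← add_smul, ← add_smul, ← sub_smul, smul_smul]
  congr 1
  have l3 : i ≤ b₁ + b₂ := by omega
  rcases le_or_gt b₁ i with h1 | h1 <;> rcases le_or_gt b₂ i with h2 | h2
  · have e1 : b₁ - i = 0 := by omega
    have e2 : b₂ - i = 0 := by omega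
    simp only [e1, e2]
    push_cast [Nat.cast_sub h1, Nat.cast_sub h2, Nat.cast_sub l3]
    ring
  · have e1 : b₁ - i = 0 := by omega
    have e2 : i - b₂ = 0 := by omega
    simp only [e1, e2]
    push_cast [Nat.cast_sub h1, Nat.cast_sub (le_of_lt h2), Nat.cast_sub l3]
    ring
  · have e1 : i - b₁ = 0 := by omega
    have e2 : b₂ - i = 0 := by omega
    simp only [e1, e2]
    push_cast [Nat.cast_sub (le_of_lt h1), Nat.cast_sub h2, Nat.cast_sub l3]
    ring
  · have e1 : i - b₁ = 0 := by omega
    have e2 : i - b₂ = 0 := by omega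
    simp only [e1, e2]
    push_cast [Nat.cast_sub (le_of_lt h1), Nat.cast_sub (le_of_lt h2), Nat.cast_sub l3]
    ring


lemma commute_dd (i j : ℕ) : Commute (dop i) (dop j) := dd_comm i j

lemma commute_d_G (a b : ℕ) : Commute (dop a) (Gop b) :=
  Commute.sum_right _ _ _ fun i _ =>
    ((commute_dd a i).mul_right (commute_dd a (b - i))).smul_right _

lemma commute_G_G (b₁ b₂ : ℕ) : Commute (Gop b₁) (Gop b₂) :=
  Commute.sum_left _ _ _ fun i _ =>
    (((commute_d_G i b₂).mul_left (commute_d_G (b₁ - i) b₂)).smul_left _)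

lemma cm_smul_one_left (c : ℝ) (A : Module.End ℝ PP) : cm (c • 1) A = 0 :=
  cm_of_commute (commute_smul_one c A)

lemma cm_smul_one_right (c : ℝ) (A : Module.End ℝ PP) : cm A (c • 1) = 0 :=
  cm_of_commute (commute_smul_one c A).symm

lemma GW_sym' (b₁ b₂ : ℕ) :
    (∑ i ∈ Finset.Ioo 0 b₁,
        ((2 * (i * ((b₁ - i) * (b₁ + b₂ - i))) : ℕ) : ℝ) • (dop i * dop (b₁ + b₂ - i)))
      - (∑ i ∈ Finset.Ioo 0 b₂,
        ((2 * (i * ((b₂ - i) * (b₁ + b₂ - i))) : ℕ) : ℝ) • (dop i * dop (b₁ + b₂ - i)))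
      = ((b₁ : ℝ) - (b₂ : ℝ)) • Gop (b₁ + b₂) := by
  have h := GW_sym b₁ b₂
  simpa only [Nat.add_comm b₂ b₁] using h

lemma hkappa_zero (u v ε : ℝ) (b₁ b₂ : ℕ) :
    ((b₁ : ℝ) - (b₂ : ℝ)) •
        ((if b₁ + b₂ = 0 then (ε ^ 2)⁻¹ * (u * v) else 0) • (1 : Module.End ℝ PP)) = 0 := by
  rcases Nat.eq_zero_or_pos (b₁ + b₂) with h | h
  · have h1 : b₁ = 0 := by omega
    have h2 : b₂ = 0 := by omega
    subst h1; subst h2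
    simp
  · rw [if_neg (by omega)]
    simp

lemma cm_E_E (u v ε : ℝ) (b₁ b₂ N : ℕ) (h1 : b₁ ≤ N) (h2 : b₂ ≤ N) :
    cm (Eop u v ε b₁ N) (Eop u v ε b₂ N)
      = ((b₁ : ℝ) - (b₂ : ℝ)) • Eop u v ε (b₁ + b₂) N
        + (cm (Wop b₁ N) (Wop b₂ N) - ((b₁ : ℝ) - (b₂ : ℝ)) • Wop (b₁ + b₂) N) := by
  have zAA : cm (((u + v) * (b₁ : ℝ)) • dop b₁) (((u + v) * (b₂ : ℝ)) • dop b₂) = 0 :=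
    cm_of_commute (((commute_dd b₁ b₂).smul_left _).smul_right _)
  have zAG : cm (((u + v) * (b₁ : ℝ)) • dop b₁) ((ε ^ 2)⁻¹ • Gop b₂) = 0 :=
    cm_of_commute (((commute_d_G b₁ b₂).smul_left _).smul_right _)
  have zGA : cm ((ε ^ 2)⁻¹ • Gop b₁) (((u + v) * (b₂ : ℝ)) • dop b₂) = 0 :=
    cm_of_commute ((((commute_d_G b₂ b₁).symm).smul_left _).smul_right _)
  have zGG : cm ((ε ^ 2)⁻¹ • Gop b₁) ((ε ^ 2)⁻¹ • Gop b₂) = 0 :=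
    cm_of_commute (((commute_G_G b₁ b₂).smul_left _).smul_right _)
  unfold Eop
  simp only [cm_add_left, cm_add_right, cm_smul_one_left, cm_smul_one_right]
  rw [zAA, zAG, zGA, zGG, cm_A_W u v b₁ b₂ N h1,
    cm_antisymm (Wop b₁ N) (((u + v) * (b₂ : ℝ)) • dop b₂), cm_A_W u v b₂ b₁ N h2,
    cm_smul_right ((ε ^ 2)⁻¹) (Wop b₁ N) (Gop b₂), cm_antisymm (Wop b₁ N) (Gop b₂),
    cm_smul_left ((ε ^ 2)⁻¹) (Gop b₁) (Wop b₂ N), cm_G_W b₁ b₂ N h1, cm_G_W b₂ b₁ N h2]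
  simp only [Nat.add_comm b₂ b₁]
  have hY : (∑ i ∈ Finset.Ioo 0 b₂,
        ((2 * (i * ((b₂ - i) * (b₁ + b₂ - i))) : ℕ) : ℝ) • (dop i * dop (b₁ + b₂ - i)))
      = (∑ i ∈ Finset.Ioo 0 b₁,
          ((2 * (i * ((b₁ - i) * (b₁ + b₂ - i))) : ℕ) : ℝ) • (dop i * dop (b₁ + b₂ - i)))
        - ((b₁ : ℝ) - (b₂ : ℝ)) • Gop (b₁ + b₂) := by
    rw [← GW_sym' b₁ b₂]
    abel
  rw [hY, smul_add, smul_add, smul_add, hkappa_zero u v ε b₁ b₂]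
  push_cast
  module

end VirasoroAux

/-- The Virasoro-type operator
`L_b = (u+v)·b·∂/∂p_b + Σ_{j≥1} (b+j)(p_j - δ_{j,1})∂/∂p_{b+j}
      + ε^{-2} Σ_{i+j=b, i,j≥1} i·j·∂²/∂p_i∂p_j + ε^{-2} u v δ_{b,0}`,
acting on polynomials in the formal variables `p_1, p_2, …`
(here the variable with index `j` represents `p_j`). -/
noncomputable def Vir (u v ε : ℝ) (b : ℕ) (f : MvPolynomial ℕ ℝ) : MvPolynomial ℕ ℝ :=
  ((u + v) * (b : ℝ)) • pderiv b f
    + (∑ᶠ j : ℕ, if 1 ≤ j then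
        ((b + j : ℕ) : ℝ) • ((X j - if j = 1 then 1 else 0) * pderiv (b + j) f)
      else 0)
    + (ε ^ 2)⁻¹ • ∑ i ∈ Finset.Ioo 0 b, ((i * (b - i) : ℕ) : ℝ) • pderiv i (pderiv (b - i) f)
    + (if b = 0 then (ε ^ 2)⁻¹ * (u * v) else 0) • f

noncomputable section VirasoroAux2

lemma Vir_eq_Eop (u v ε : ℝ) (b N : ℕ) (f : PP) (hN : ∀ m, N < m → pderiv m f = 0) :
    Vir u v ε b f = Eop u v ε b N f := by
  unfold Vir Eop
  have hfin : (∑ᶠ j : ℕ, if 1 ≤ j then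
        ((b + j : ℕ) : ℝ) • ((X j - if j = 1 then 1 else 0) * pderiv (b + j) f)
      else 0) = Wop b N f := by
    rw [Wop, LinearMap.sum_apply]
    rw [finsum_eq_finset_sum_of_support_subset _ (s := Finset.Icc 1 N) ?_]
    · refine Finset.sum_congr rfl fun j hj => ?_
      rw [if_pos (Finset.mem_Icc.mp hj).1]
      rfl
    · intro j hj
      simp only [Function.mem_support, ne_eq] at hj
      by_contra hc
      apply hj
      simp only [Finset.coe_Icc, Set.mem_Icc] at hc
      push_neg at hc
      rcases Nat.lt_or_ge j 1 with h | h
      · rw [if_neg (by omega)]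
      · rw [if_pos h, hN (b + j) (by omega)]
        simp
  rw [hfin]
  simp only [LinearMap.add_apply, LinearMap.smul_apply, Module.End.one_apply, Gop,
    LinearMap.sum_apply, Module.End.mul_apply, dop_apply]

lemma Eop_preserve (u v ε : ℝ) (b N : ℕ) (f : PP) (hb : b ≤ N)
    (hN : ∀ m, N < m → pderiv m f = 0) :
    ∀ m, N < m → pderiv m (Eop u v ε b N f) = 0 := by
  intro m hm
  unfold Eop
  simp only [LinearMap.add_apply, LinearMap.smul_apply, Module.End.one_apply, Wop, Gop,
    LinearMap.sum_apply, Module.End.mul_apply, dop_apply, mop_apply, map_add, map_smul, Derivation.map_smul, map_sum]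
  have p1 : pderiv m (pderiv b f) = 0 := by
    rw [pderiv_comm', hN m hm, map_zero]
  have p2 : ∀ j ∈ Finset.Icc 1 N, pderiv m (qv j * pderiv (b + j) f) = 0 := by
    intro j hj
    simp only [Finset.mem_Icc] at hj
    rw [pderiv_mul, pderiv_qv, if_neg (show m ≠ j by omega), pderiv_comm' m (b + j),
      hN m hm, map_zero]
    simp
  have p3 : ∀ i ∈ Finset.Ioo 0 b, pderiv m (pderiv i (pderiv (b - i) f)) = 0 := by
    intro i hi
    rw [pderiv_comm' m i, pderiv_comm' m (b - i), hN m hm, map_zero, map_zero]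
  rw [p1, hN m hm, Finset.sum_eq_zero (fun j hj => by rw [p2 j hj, smul_zero]),
    Finset.sum_eq_zero (fun i hi => by rw [p3 i hi, smul_zero])]
  simp

/-- The operators `L_b` satisfy the Virasoro commutation relations
`[L_{b₁}, L_{b₂}] = (b₁ - b₂) L_{b₁+b₂}` for all `b₁, b₂ ≥ 0`. -/
theorem virasoro_commutation (u v ε : ℝ) (hu : u ≠ 0) (hv : v ≠ 0) (hε : ε ≠ 0)
    (b₁ b₂ : ℕ) (f : MvPolynomial ℕ ℝ) :
    Vir u v ε b₁ (Vir u v ε b₂ f) - Vir u v ε b₂ (Vir u v ε b₁ f)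
      = ((b₁ : ℝ) - (b₂ : ℝ)) • Vir u v ε (b₁ + b₂) f := by
  classical
  set N : ℕ := b₁ + b₂ + f.vars.sup id with hNdef
  have hN : ∀ m, N < m → pderiv m f = 0 := by
    intro m hm
    apply pderiv_eq_zero_of_notMem_vars
    intro hmem
    have h := Finset.le_sup (f := id) hmem
    simp only [id_eq] at h
    omega
  have h1 : b₁ ≤ N := by omega
  have h2 : b₂ ≤ N := by omega
  have hP2 := Eop_preserve u v ε b₂ N f h2 hN
  have hP1 := Eop_preserve u v ε b₁ N f h1 hN
  rw [Vir_eq_Eop u v ε b₂ N f hN, Vir_eq_Eop u v ε b₁ N f hN,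
    Vir_eq_Eop u v ε b₁ N _ hP2, Vir_eq_Eop u v ε b₂ N _ hP1,
    Vir_eq_Eop u v ε (b₁ + b₂) N f hN]
  have key := congrArg (fun T : Module.End ℝ PP => T f) (cm_E_E u v ε b₁ b₂ N h1 h2)
  simp only [cm, LinearMap.sub_apply, Module.End.mul_apply, LinearMap.add_apply,
    LinearMap.smul_apply] at key
  have hWW := cm_W_W_apply b₁ b₂ N f hN
  simp only [cm, LinearMap.sub_apply, Module.End.mul_apply, LinearMap.smul_apply] at hWW
  rw [key, hWW]
  abel

end VirasoroAux2
end

section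
/- The generating series h(λ, n, w) := Σ_{i≥0} (1/i!) · (∏_{r=0}^{i-1} (n+r)(w+r)) · λ^{-i} satisfies the three-term recurrence in n: the functions ψ_A(λ) = λ^n · h(-λ, -n, -(n+α)) satisfy the difference equation ψ_A(n+1) + (2n + α + 1)·ψ_A(n) + n(n+α)·ψ_A(n-1) = λ·ψ_A(n), as an identity of formal power series in λ^{-1} (times λ^n). -/
open PowerSeries Finset

/-- The formal power series in `λ⁻¹` (with `X` standing for `λ⁻¹`) given by
`h(-λ, -n, -(n+α)) = Σ_{i≥0} (1/i!) ∏_{r=0}^{i-1} (-n+r)(-(n+α)+r) · (-λ)^{-i}`,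
i.e. `ψ_A(λ) = λ^n · waveA n α`. -/
noncomputable def waveA (n α : ℝ) : PowerSeries ℝ :=
  PowerSeries.mk fun i =>
    (-1) ^ i * ((i.factorial : ℝ))⁻¹ * ∏ r ∈ Finset.range i, ((-n + r) * (-(n + α) + r))

lemma lemA (n α : ℝ) (j : ℕ) :
    ∏ r ∈ Finset.range (j+1), ((-(n+1) + (r:ℝ)) * (-((n+1) + α) + r))
      = (n+1)*((n+1)+α) * ∏ r ∈ Finset.range j, ((-n + (r:ℝ)) * (-(n + α) + r)) := by
  rw [Finset.prod_range_succ']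
  rw [Finset.prod_congr rfl (fun r _ => by push_cast; ring_nf :
    ∀ r ∈ Finset.range j, ((-(n+1) + ((r+1:ℕ):ℝ)) * (-((n+1) + α) + ((r+1:ℕ):ℝ)))
      = ((-n + (r:ℝ)) * (-(n + α) + r)))]
  push_cast
  ring

lemma lemB (n α : ℝ) (j : ℕ) :
    ∏ r ∈ Finset.range (j+1), ((-n + (r:ℝ)) * (-(n + α) + r))
      = (n*(n+α)) * ∏ r ∈ Finset.range j, ((-(n-1) + (r:ℝ)) * (-((n-1) + α) + r)) := by
  rw [Finset.prod_range_succ']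
  rw [Finset.prod_congr rfl (fun r _ => by push_cast; ring_nf :
    ∀ r ∈ Finset.range j, ((-n + ((r+1:ℕ):ℝ)) * (-(n + α) + ((r+1:ℕ):ℝ)))
      = ((-(n-1) + (r:ℝ)) * (-((n-1) + α) + r)))]
  push_cast
  ring

/-- The wave functions `ψ_A(λ) = λ^n h(-λ, -n, -(n+α))` satisfy the difference equation
`ψ_A(n+1) + (2n+α+1) ψ_A(n) + n(n+α) ψ_A(n-1) = λ ψ_A(n)` of the Lax operator
`L = Λ + (2n+α+1) + n(n+α) Λ⁻¹` with eigenvalue `λ`.  After multiplying by `λ^{-(n+1)}`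
it becomes the following identity of formal power series in `X = λ⁻¹`. -/
theorem waveA_difference_equation (n α : ℝ) :
    waveA (n + 1) α + PowerSeries.C (2 * n + α + 1) * PowerSeries.X * waveA n α +
      PowerSeries.C (n * (n + α)) * PowerSeries.X ^ 2 * waveA (n - 1) α = waveA n α := by
  ext i
  rw [map_add, map_add]
  rw [show (PowerSeries.C (2 * n + α + 1) * PowerSeries.X * waveA n α)
      = PowerSeries.C (2 * n + α + 1) * (PowerSeries.X ^ 1 * waveA n α) by ring,
    show (PowerSeries.C (n * (n + α)) * PowerSeries.X ^ 2 * waveA (n-1) α)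
      = PowerSeries.C (n * (n + α)) * (PowerSeries.X ^ 2 * waveA (n-1) α) by ring,
    coeff_C_mul, coeff_C_mul, coeff_X_pow_mul', coeff_X_pow_mul']
  unfold waveA
  simp only [coeff_mk]
  match i with
  | 0 => norm_num
  | 1 => norm_num; ring
  | (j+2) =>
    rw [if_pos (by omega), if_pos (by omega)]
    simp only [Nat.add_sub_cancel, show j + 2 - 1 = j + 1 from rfl]
    rw [lemA n α (j+1), show j+2 = (j+1)+1 from rfl,
      Finset.prod_range_succ (fun x => (-n + (x:ℝ)) * (-(n+α) + x)) (j+1), lemB n α j]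
    have h1 : ((j+1+1).factorial : ℝ) = ((j+1).factorial : ℝ) * (j+2) := by
      push_cast [Nat.factorial_succ]; ring
    have h2 : ((j+1).factorial : ℝ) = (j.factorial : ℝ) * (j+1) := by
      push_cast [Nat.factorial_succ]; ring
    have hj0 : (j.factorial : ℝ) ≠ 0 := Nat.cast_ne_zero.mpr j.factorial_ne_zero
    rw [h1, h2]
    push_cast
    field_simp
    ring
end

section
/- The hypergeometric-type series h(λ, n, w) = Σ_{i≥0} (1/i!)(∏_{r=0}^{i-1}(n+r)(w+r)) λ^{-i} satisfies the identity h(-λ, -n, -w)·h(λ, n, w) = 1 + Σ_{μ≥1} c_μ(n,w) λ^{-μ-1} where, writing c_μ(n,w) as the coefficient of λ^{-μ-1} in the product, each c_μ(n,w) is a polynomial in n and w with integer coefficients divisible by nw; in particular the coefficient of λ^{-1} in h(-λ,-n,-w)h(λ,n,w) vanishes and the coefficient of λ^{-2} equals nw. -/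
open PowerSeries Finset MvPolynomial

/-- Coefficient ring `ℚ[n, w]`: `MvPolynomial.X 0` is `n`, `MvPolynomial.X 1` is `w`. -/
abbrev Rnw := MvPolynomial (Fin 2) ℚ

/-- The series `h(λ, n, w) = Σ_{i≥0} (1/i!) ∏_{r=0}^{i-1} (n+r)(w+r) λ^{-i}` as a formal
power series in `X = λ⁻¹` over `ℚ[n, w]`. -/
noncomputable def hPlus : PowerSeries Rnw :=
  PowerSeries.mk fun i =>
    MvPolynomial.C ((i.factorial : ℚ))⁻¹ *
      ∏ r ∈ Finset.range i, ((MvPolynomial.X 0 + (r : Rnw)) * (MvPolynomial.X 1 + (r : Rnw)))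

/-- The series `h(-λ, -n, -w)` as a formal power series in `X = λ⁻¹` over `ℚ[n, w]`. -/
noncomputable def hMinus : PowerSeries Rnw :=
  PowerSeries.mk fun i =>
    MvPolynomial.C ((-1 : ℚ) ^ i * ((i.factorial : ℚ))⁻¹) *
      ∏ r ∈ Finset.range i, ((-MvPolynomial.X 0 + (r : Rnw)) * (-MvPolynomial.X 1 + (r : Rnw)))

namespace HProd

noncomputable def nn : Rnw := MvPolynomial.X 0
noncomputable def ww : Rnw := MvPolynomial.X 1
noncomputable def bb : Rnw := nn * ww
noncomputable def aa : Rnw := nn + ww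

noncomputable def cc (i : ℕ) : Rnw :=
  MvPolynomial.C ((i.factorial : ℚ))⁻¹ *
      ∏ r ∈ Finset.range i, ((MvPolynomial.X 0 + (r : Rnw)) * (MvPolynomial.X 1 + (r : Rnw)))

noncomputable def dd (i : ℕ) : Rnw :=
  MvPolynomial.C ((-1 : ℚ) ^ i * ((i.factorial : ℚ))⁻¹) *
      ∏ r ∈ Finset.range i, ((-MvPolynomial.X 0 + (r : Rnw)) * (-MvPolynomial.X 1 + (r : Rnw)))

lemma hPlus_eq : hPlus = PowerSeries.mk cc := rfl
lemma hMinus_eq : hMinus = PowerSeries.mk dd := rfl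

lemma cc_zero : cc 0 = 1 := by simp [cc]
lemma dd_zero : dd 0 = 1 := by simp [dd]

lemma factorial_aux (i : ℕ) : ((i : ℚ)+1) * (((i+1).factorial : ℚ))⁻¹ = ((i.factorial : ℚ))⁻¹ := by
  have h1 : (((i+1).factorial : ℚ)) = ((i:ℚ)+1) * (i.factorial : ℚ) := by
    rw [Nat.factorial_succ]; push_cast; ring
  have h2 : ((i:ℚ)+1) ≠ 0 := by positivity
  rw [h1, mul_inv, ← mul_assoc, mul_inv_cancel₀ h2, one_mul]

lemma cc_succ (i : ℕ) : ((i : Rnw)+1) * cc (i+1) = (nn + i) * (ww + i) * cc i := by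
  unfold cc nn ww
  rw [Finset.prod_range_succ]
  have hcast : MvPolynomial.C ((i:ℚ)+1) = ((i : Rnw)+1) := by rw [map_add, map_one, map_natCast]
  have key : MvPolynomial.C (((i+1).factorial : ℚ))⁻¹ * ((i : Rnw)+1)
      = MvPolynomial.C ((i.factorial : ℚ))⁻¹ := by
    rw [← hcast, ← map_mul]; congr 1
    linear_combination factorial_aux i
  linear_combination ((∏ r ∈ Finset.range i, ((MvPolynomial.X 0 + (r:Rnw)) * (MvPolynomial.X 1 + (r:Rnw)))) * ((MvPolynomial.X 0 + (i:Rnw)) * (MvPolynomial.X 1 + (i:Rnw)))) * key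

lemma dd_succ (i : ℕ) : ((i : Rnw)+1) * dd (i+1) = -(((i:Rnw) - nn) * ((i:Rnw) - ww)) * dd i := by
  unfold dd nn ww
  rw [Finset.prod_range_succ]
  have hC : (MvPolynomial.C ((-1:ℚ)^(i+1) * (((i+1).factorial : ℚ))⁻¹) : Rnw)
      = - MvPolynomial.C ((-1:ℚ)^i * (((i+1).factorial : ℚ))⁻¹) := by
    rw [← map_neg]; congr 1; ring
  rw [hC]
  have hcast : MvPolynomial.C ((i:ℚ)+1) = ((i : Rnw)+1) := by rw [map_add, map_one, map_natCast]
  have key : MvPolynomial.C ((-1:ℚ)^i * (((i+1).factorial : ℚ))⁻¹) * ((i : Rnw)+1)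
      = MvPolynomial.C ((-1:ℚ)^i * ((i.factorial : ℚ))⁻¹) := by
    rw [← hcast, ← map_mul]; congr 1
    linear_combination ((-1:ℚ)^i) * factorial_aux i
  linear_combination (-((∏ r ∈ Finset.range i, ((-MvPolynomial.X 0 + (r:Rnw)) * (-MvPolynomial.X 1 + (r:Rnw)))) * ((-MvPolynomial.X 0 + (i:Rnw)) * (-MvPolynomial.X 1 + (i:Rnw))))) * key


noncomputable def U1 : PowerSeries Rnw := PowerSeries.mk fun i => (nn + i) * (ww + i) * cc i
noncomputable def V1 : PowerSeries Rnw := PowerSeries.mk fun i => -(((i:Rnw) - nn) * ((i:Rnw) - ww)) * dd i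

lemma D_hPlus : d⁄dX Rnw hPlus = U1 := by
  refine PowerSeries.ext fun k => ?_
  rw [PowerSeries.coeff_derivative, hPlus_eq, U1, PowerSeries.coeff_mk, PowerSeries.coeff_mk]
  show cc (k+1) * ((k:Rnw)+1) = _
  linear_combination cc_succ k

lemma D_hMinus : d⁄dX Rnw hMinus = V1 := by
  refine PowerSeries.ext fun k => ?_
  rw [PowerSeries.coeff_derivative, hMinus_eq, V1, PowerSeries.coeff_mk, PowerSeries.coeff_mk]
  show dd (k+1) * ((k:Rnw)+1) = _
  linear_combination dd_succ k


noncomputable def CC : Rnw →+* PowerSeries Rnw := PowerSeries.C (R := Rnw)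

lemma ode_u : (PowerSeries.X : Rnw⟦X⟧)^2 * (d⁄dX Rnw U1)
    = (1 - (CC aa + 1) * PowerSeries.X) * U1 - CC bb * hPlus := by
  have hR : (1 - (CC aa + 1) * PowerSeries.X) * U1 - CC bb * hPlus
      = U1 - CC aa * (PowerSeries.X * U1) - PowerSeries.X * U1 - CC bb * hPlus := by unfold CC; ring
  rw [hR]
  refine PowerSeries.ext fun k => ?_
  rcases k with _ | _ | k
  · simp only [map_sub, PowerSeries.coeff_X_pow_mul', CC, PowerSeries.coeff_C_mul,
      PowerSeries.coeff_zero_X_mul, hPlus_eq, U1, PowerSeries.coeff_mk]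
    norm_num
    unfold bb
    ring
  · simp only [map_sub, PowerSeries.coeff_X_pow_mul', CC, PowerSeries.coeff_C_mul,
      PowerSeries.coeff_succ_X_mul, hPlus_eq, U1, PowerSeries.coeff_mk]
    norm_num
    have h0 := cc_succ 0
    push_cast at h0 ⊢
    unfold aa bb
    linear_combination (-(nn+1)*(ww+1) + nn*ww) * h0
  · rw [pow_two, mul_assoc, PowerSeries.coeff_succ_X_mul, PowerSeries.coeff_succ_X_mul,
      PowerSeries.coeff_derivative]
    simp only [map_sub, CC, PowerSeries.coeff_C_mul, PowerSeries.coeff_succ_X_mul,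
      hPlus_eq, U1, PowerSeries.coeff_mk]
    have hc := cc_succ (k+1)
    push_cast at hc ⊢
    unfold aa bb
    linear_combination (-(nn + ww + (k:Rnw) + 2)) * hc

lemma ode_v : (PowerSeries.X : Rnw⟦X⟧)^2 * (d⁄dX Rnw V1)
    = ((CC aa - 1) * PowerSeries.X - 1) * V1 - CC bb * hMinus := by
  have hR : ((CC aa - 1) * PowerSeries.X - 1) * V1 - CC bb * hMinus
      = CC aa * (PowerSeries.X * V1) - PowerSeries.X * V1 - V1 - CC bb * hMinus := by unfold CC; ring
  rw [hR]
  refine PowerSeries.ext fun k => ?_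
  rcases k with _ | _ | k
  · simp only [map_sub, PowerSeries.coeff_X_pow_mul', CC, PowerSeries.coeff_C_mul,
      PowerSeries.coeff_zero_X_mul, hMinus_eq, V1, PowerSeries.coeff_mk]
    norm_num
    unfold bb
    ring
  · simp only [map_sub, PowerSeries.coeff_X_pow_mul', CC, PowerSeries.coeff_C_mul,
      PowerSeries.coeff_succ_X_mul, hMinus_eq, V1, PowerSeries.coeff_mk]
    norm_num
    have h0 := dd_succ 0
    push_cast at h0 ⊢
    unfold aa bb
    linear_combination (nn + ww - 1) * h0
  · rw [pow_two, mul_assoc, PowerSeries.coeff_succ_X_mul, PowerSeries.coeff_succ_X_mul,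
      PowerSeries.coeff_derivative]
    simp only [map_sub, CC, PowerSeries.coeff_C_mul, PowerSeries.coeff_succ_X_mul,
      hMinus_eq, V1, PowerSeries.coeff_mk]
    have hd := dd_succ (k+1)
    push_cast at hd ⊢
    unfold aa bb
    linear_combination ((nn + ww) - ((k:Rnw)+2)) * hd


lemma DZ : d⁄dX Rnw ((PowerSeries.X : Rnw⟦X⟧)^2 * U1 * V1 + CC bb * (hMinus * hPlus)) = 0 := by
  have h1 := ode_u
  have h2 := ode_v
  rw [pow_two] at h1 h2 ⊢
  simp only [map_add, Derivation.leibniz, smul_eq_mul, derivative_X, CC, derivative_C,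
    D_hPlus, D_hMinus] at h1 h2 ⊢
  linear_combination V1 * h1 + U1 * h2

lemma keyId : (PowerSeries.X : Rnw⟦X⟧)^2 * U1 * V1 = CC bb * (1 - hMinus * hPlus) := by
  have hZ : (PowerSeries.X : Rnw⟦X⟧)^2 * U1 * V1 + CC bb * (hMinus * hPlus) = CC bb := by
    apply PowerSeries.derivative.ext (R := Rnw)
    · rw [DZ]
      simp [CC]
    · simp [CC, hMinus_eq, hPlus_eq, cc_zero, dd_zero, constantCoeff_mk]
  linear_combination hZ

lemma starF : (PowerSeries.X : Rnw⟦X⟧)^2 * (d⁄dX Rnw (U1 * hMinus))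
    = (U1 * hMinus) - CC aa * (PowerSeries.X * (U1 * hMinus)) - PowerSeries.X * (U1 * hMinus)
      - CC bb * (hMinus * hPlus) - CC bb * (hMinus * hPlus) + CC bb := by
  have h1 := ode_u
  have hk := keyId
  simp only [Derivation.leibniz, smul_eq_mul, D_hMinus] at *
  linear_combination hk + hMinus * h1

lemma starG : (PowerSeries.X : Rnw⟦X⟧)^2 * (d⁄dX Rnw (hPlus * V1))
    = CC aa * (PowerSeries.X * (hPlus * V1)) - PowerSeries.X * (hPlus * V1) - (hPlus * V1)
      - CC bb * (hMinus * hPlus) - CC bb * (hMinus * hPlus) + CC bb := by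
  have h2 := ode_v
  have hk := keyId
  simp only [Derivation.leibniz, smul_eq_mul, D_hPlus] at *
  linear_combination hk + hPlus * h2

lemma starFG : (PowerSeries.X : Rnw⟦X⟧)^2 * ((U1 * hMinus) * (hPlus * V1))
    = CC bb * (hMinus * hPlus) - CC bb * ((hMinus * hPlus) * (hMinus * hPlus)) := by
  linear_combination (hMinus * hPlus) * keyId


noncomputable def fF (k : ℕ) : Rnw := PowerSeries.coeff k (U1 * hMinus)
noncomputable def gG (k : ℕ) : Rnw := PowerSeries.coeff k (hPlus * V1)
noncomputable def pP (k : ℕ) : Rnw := PowerSeries.coeff k (hMinus * hPlus)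

lemma pP_zero : pP 0 = 1 := by
  simp [pP, hMinus_eq, hPlus_eq, PowerSeries.coeff_zero_eq_constantCoeff, constantCoeff_mk,
    cc_zero, dd_zero]

lemma fF_zero : fF 0 = bb := by
  simp [fF, U1, hMinus_eq, PowerSeries.coeff_zero_eq_constantCoeff, constantCoeff_mk,
    cc_zero, dd_zero, bb]

lemma gG_zero : gG 0 = -bb := by
  simp [gG, V1, hPlus_eq, PowerSeries.coeff_zero_eq_constantCoeff, constantCoeff_mk,
    cc_zero, dd_zero, bb]

lemma pP_one : pP 1 = 0 := by
  have hd := dd_succ 0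
  have hc := cc_succ 0
  push_cast at hd hc
  rw [pP, PowerSeries.coeff_mul, Finset.Nat.sum_antidiagonal_eq_sum_range_succ_mk,
    Finset.sum_range_succ, Finset.sum_range_succ, Finset.sum_range_zero]
  simp only [hMinus_eq, hPlus_eq, PowerSeries.coeff_mk]
  norm_num
  linear_combination (cc 0) * hd + (dd 0) * hc

lemma recF (k : ℕ) : fF (k+1) = (aa + ((k:Rnw)+1)) * fF k + 2*bb*pP (k+1) := by
  rcases k with _ | j
  · have h := congrArg (PowerSeries.coeff 1) starF
    rw [pow_two, mul_assoc] at h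
    rw [show (1:ℕ) = 0 + 1 from rfl] at h
    rw [PowerSeries.coeff_succ_X_mul, PowerSeries.coeff_zero_X_mul] at h
    simp only [map_sub, map_add, CC, PowerSeries.coeff_C_mul, PowerSeries.coeff_succ_X_mul,
      PowerSeries.coeff_C] at h
    norm_num at h
    unfold fF pP at *
    simp only [PowerSeries.coeff_zero_eq_constantCoeff_apply, map_mul] at h ⊢
    push_cast
    linear_combination -h
  · have h := congrArg (PowerSeries.coeff (j+1+1)) starF
    rw [pow_two, mul_assoc, PowerSeries.coeff_succ_X_mul, PowerSeries.coeff_succ_X_mul,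
      PowerSeries.coeff_derivative] at h
    simp only [map_sub, map_add, CC, PowerSeries.coeff_C_mul, PowerSeries.coeff_succ_X_mul,
      PowerSeries.coeff_C] at h
    norm_num at h
    unfold fF pP at *
    push_cast
    linear_combination -h

lemma recG (k : ℕ) : gG (k+1) = (aa - ((k:Rnw)+1)) * gG k - 2*bb*pP (k+1) := by
  rcases k with _ | j
  · have h := congrArg (PowerSeries.coeff 1) starG
    rw [pow_two, mul_assoc] at h
    rw [show (1:ℕ) = 0 + 1 from rfl] at h
    rw [PowerSeries.coeff_succ_X_mul, PowerSeries.coeff_zero_X_mul] at h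
    simp only [map_sub, map_add, CC, PowerSeries.coeff_C_mul, PowerSeries.coeff_succ_X_mul,
      PowerSeries.coeff_C] at h
    norm_num at h
    unfold gG pP at *
    simp only [PowerSeries.coeff_zero_eq_constantCoeff_apply, map_mul] at h ⊢
    push_cast
    linear_combination h
  · have h := congrArg (PowerSeries.coeff (j+1+1)) starG
    rw [pow_two, mul_assoc, PowerSeries.coeff_succ_X_mul, PowerSeries.coeff_succ_X_mul,
      PowerSeries.coeff_derivative] at h
    simp only [map_sub, map_add, CC, PowerSeries.coeff_C_mul, PowerSeries.coeff_succ_X_mul,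
      PowerSeries.coeff_C] at h
    norm_num at h
    unfold gG pP at *
    push_cast
    linear_combination h

lemma recP (m : ℕ) : (∑ ij ∈ Finset.HasAntidiagonal.antidiagonal m, fF ij.1 * gG ij.2)
    = bb * pP (m+2) - bb * ∑ ij ∈ Finset.HasAntidiagonal.antidiagonal (m+2), pP ij.1 * pP ij.2 := by
  have h := congrArg (PowerSeries.coeff (m+1+1)) starFG
  unfold CC at h
  rw [pow_two, mul_assoc, PowerSeries.coeff_succ_X_mul, PowerSeries.coeff_succ_X_mul,
    PowerSeries.coeff_mul, map_sub, PowerSeries.coeff_C_mul, PowerSeries.coeff_C_mul] at h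
  nth_rewrite 2 [PowerSeries.coeff_mul] at h
  unfold fF gG pP
  rw [show m+2 = m+1+1 from rfl]
  exact h


noncomputable def iota : MvPolynomial (Fin 2) ℤ →+* Rnw := MvPolynomial.map (Int.castRingHom ℚ)

noncomputable def TT : Subring Rnw := iota.range

lemma nn_mem : nn ∈ TT := ⟨MvPolynomial.X 0, by simp [iota, nn]⟩
lemma ww_mem : ww ∈ TT := ⟨MvPolynomial.X 1, by simp [iota, ww]⟩
lemma bb_mem : bb ∈ TT := Subring.mul_mem _ nn_mem ww_mem
lemma aa_mem : aa ∈ TT := Subring.add_mem _ nn_mem ww_mem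
lemma nat_mem (k : ℕ) : ((k:Rnw)) ∈ TT := natCast_mem TT k

def Dv (x : Rnw) : Prop := ∃ t ∈ TT, x = bb * t
def Dw (x : Rnw) : Prop := ∃ t ∈ TT, x = bb * (bb * t)

lemma Dv_zero : Dv 0 := ⟨0, Subring.zero_mem _, by ring⟩
lemma Dw_zero : Dw 0 := ⟨0, Subring.zero_mem _, by ring⟩
lemma Dv_bb : Dv bb := ⟨1, Subring.one_mem _, by ring⟩
lemma Dv_neg_bb : Dv (-bb) := ⟨-1, Subring.neg_mem _ (Subring.one_mem _), by ring⟩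
lemma Dv_add {x y : Rnw} (hx : Dv x) (hy : Dv y) : Dv (x + y) := by
  obtain ⟨t, ht, rfl⟩ := hx; obtain ⟨s, hs, rfl⟩ := hy
  exact ⟨t + s, Subring.add_mem _ ht hs, by ring⟩
lemma Dw_add {x y : Rnw} (hx : Dw x) (hy : Dw y) : Dw (x + y) := by
  obtain ⟨t, ht, rfl⟩ := hx; obtain ⟨s, hs, rfl⟩ := hy
  exact ⟨t + s, Subring.add_mem _ ht hs, by ring⟩
lemma Dv_tmul {c x : Rnw} (hc : c ∈ TT) (hx : Dv x) : Dv (c * x) := by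
  obtain ⟨t, ht, rfl⟩ := hx
  exact ⟨c * t, Subring.mul_mem _ hc ht, by ring⟩
lemma Dw_of_mul {x y : Rnw} (hx : Dv x) (hy : Dv y) : Dw (x * y) := by
  obtain ⟨t, ht, rfl⟩ := hx; obtain ⟨s, hs, rfl⟩ := hy
  exact ⟨t * s, Subring.mul_mem _ ht hs, by ring⟩

lemma bb_ne : bb ≠ 0 := mul_ne_zero (MvPolynomial.X_ne_zero 0) (MvPolynomial.X_ne_zero 1)

lemma main (k : ℕ) : Dv (fF k) ∧ Dv (gG k) ∧ (2 ≤ k → Dv (pP k)) := by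
  induction k using Nat.strong_induction_on with
  | _ k IH =>
  have hp : 2 ≤ k → Dv (pP k) := by
    intro hk
    obtain ⟨m, rfl⟩ : ∃ m, k = m + 2 := ⟨k - 2, by omega⟩
    have hS1 : Dw (∑ ij ∈ Finset.HasAntidiagonal.antidiagonal m, fF ij.1 * gG ij.2) := by
      refine Finset.sum_induction _ _ (fun x y => Dw_add) Dw_zero ?_
      intro ij hij
      rw [Finset.HasAntidiagonal.mem_antidiagonal] at hij
      exact Dw_of_mul (IH ij.1 (by omega)).1 (IH ij.2 (by omega)).2.1
    have hsplit : (∑ ij ∈ Finset.HasAntidiagonal.antidiagonal (m+2), pP ij.1 * pP ij.2)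
        = pP (m+2) + pP (m+2) + ∑ i ∈ Finset.range (m+1), pP (i+1) * pP (m+1-i) := by
      rw [Finset.Nat.sum_antidiagonal_eq_sum_range_succ_mk, Finset.sum_range_succ',
        Finset.sum_range_succ]
      have hcg : (∑ i ∈ Finset.range (m+1), pP (i+1) * pP (m+2-(i+1)))
          = ∑ i ∈ Finset.range (m+1), pP (i+1) * pP (m+1-i) := by
        refine Finset.sum_congr rfl fun i hi => ?_
        rw [Finset.mem_range] at hi
        rw [show m+2-(i+1) = m+1-i by omega]
      rw [hcg]
      rw [show m+2-(m+1+1) = 0 by omega, show m+2-0 = m+2 by omega, pP_zero]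
      ring
    have hMid : Dw (∑ i ∈ Finset.range (m+1), pP (i+1) * pP (m+1-i)) := by
      refine Finset.sum_induction _ _ (fun x y => Dw_add) Dw_zero ?_
      intro i hi
      rw [Finset.mem_range] at hi
      rcases eq_or_ne i 0 with rfl | h0
      · rw [pP_one, zero_mul]; exact Dw_zero
      rcases eq_or_ne i m with him | hm
      · rw [him, show m+1-m = 1 by omega, pP_one, mul_zero]; exact Dw_zero
      exact Dw_of_mul ((IH (i+1) (by omega)).2.2 (by omega))
        ((IH (m+1-i) (by omega)).2.2 (by omega))
    obtain ⟨t1, ht1, e1⟩ := hS1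
    obtain ⟨t2, ht2, e2⟩ := hMid
    have E := recP m
    rw [hsplit, e1, e2] at E
    have hfin : bb * pP (m+2) = bb * (bb * (-t1 - bb*t2)) := by linear_combination E
    exact ⟨-t1 - bb*t2, Subring.sub_mem _ (Subring.neg_mem _ ht1)
      (Subring.mul_mem _ bb_mem ht2), mul_left_cancel₀ bb_ne hfin⟩
  have hf : Dv (fF k) := by
    rcases k with _ | j
    · rw [fF_zero]; exact Dv_bb
    · rw [recF j]
      apply Dv_add
      · exact Dv_tmul (Subring.add_mem _ aa_mem
          (Subring.add_mem _ (nat_mem j) (Subring.one_mem _))) (IH j (by omega)).1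
      · rcases Nat.lt_or_ge (j+1) 2 with h2 | h2
        · have hj : j = 0 := by omega
          subst hj
          rw [pP_one, mul_zero]
          exact Dv_zero
        · have hDp := hp h2
          have h2bb : ((2:Rnw) * bb) ∈ TT := Subring.mul_mem _ (natCast_mem TT 2) bb_mem
          have := Dv_tmul h2bb hDp
          rw [show (2:Rnw) * bb * pP (j+1) = 2*bb*pP (j+1) by ring] at this
          exact this
  have hg : Dv (gG k) := by
    rcases k with _ | j
    · rw [gG_zero]; exact Dv_neg_bb
    · rw [recG j]
      rw [sub_eq_add_neg]
      apply Dv_add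
      · exact Dv_tmul (Subring.sub_mem _ aa_mem
          (Subring.add_mem _ (nat_mem j) (Subring.one_mem _))) (IH j (by omega)).2.1
      · rcases Nat.lt_or_ge (j+1) 2 with h2 | h2
        · have hj : j = 0 := by omega
          subst hj
          rw [pP_one, mul_zero, neg_zero]
          exact Dv_zero
        · have hDp := hp h2
          have h2bb : ((-2:Rnw) * bb) ∈ TT := Subring.mul_mem _
            (Subring.neg_mem _ (natCast_mem TT 2)) bb_mem
          have := Dv_tmul h2bb hDp
          rw [show (-2:Rnw) * bb * pP (j+1) = -(2*bb*pP (j+1)) by ring] at this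
          exact this
  exact ⟨hf, hg, hp⟩

lemma pP_two : pP 2 = bb := by
  have E := recP 0
  rw [Finset.Nat.sum_antidiagonal_eq_sum_range_succ_mk,
    Finset.Nat.sum_antidiagonal_eq_sum_range_succ_mk] at E
  simp [Finset.sum_range_succ, fF_zero, gG_zero, pP_zero, pP_one] at E
  apply mul_left_cancel₀ bb_ne
  linear_combination E

end HProd

/-- The product `h(-λ,-n,-w)·h(λ,n,w) = 1 + Σ_{μ≥1} c_μ(n,w) λ^{-μ-1}`: its constant
coefficient is `1`, the coefficient of `λ^{-1}` vanishes, the coefficient of `λ^{-2}`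
equals `nw`, and every coefficient `c_μ` of `λ^{-μ-1}` is an integer-coefficient
polynomial divisible by `nw`. -/
theorem hProduct_coefficients :
    PowerSeries.coeff 0 (hMinus * hPlus) = 1 ∧
    PowerSeries.coeff 1 (hMinus * hPlus) = 0 ∧
    PowerSeries.coeff 2 (hMinus * hPlus) = MvPolynomial.X 0 * MvPolynomial.X 1 ∧
    ∀ μ : ℕ, 1 ≤ μ → ∃ q : MvPolynomial (Fin 2) ℤ,
      PowerSeries.coeff (μ + 1) (hMinus * hPlus) =
        MvPolynomial.X 0 * MvPolynomial.X 1 * (MvPolynomial.map (Int.castRingHom ℚ) q) := by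
  refine ⟨HProd.pP_zero, HProd.pP_one, HProd.pP_two, ?_⟩
  intro μ hμ
  obtain ⟨t, ht, e⟩ := (HProd.main (μ+1)).2.2 (by omega)
  obtain ⟨q, hq⟩ := ht
  refine ⟨q, ?_⟩
  rw [show PowerSeries.coeff (μ+1) (hMinus*hPlus) = HProd.pP (μ+1) from rfl, e, ← hq]
  rfl
end
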